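/- arXiv:0909.1727 — 6 statements merged into one kernel-verified Lean document; each statement's English description precedes it below -/
import Mathlib

section
/- Let d ≥ 3 and consider in affine coordinates (x₁,x₂,x₃) the surface germ at the origin defined by f = x₂·(x₃·l₃(x₁,x₂,x₃) + x₂·l₂(x₁,x₂) + x₁·l₁(x₁)) + x₃^d = 0, where l₁, l₂, l₃ are polynomials with l₁(0) ≠ 0. Then there is a formal (or analytic) change of local coordinates at the origin after which f becomes z₁² + z₂² + z₃^d; i.e., the origin is an A_{d−1}-singularity. -/
open MvPolynomial


/-- A surface germ at the origin of `ℂ³` has a singularity of type `A_k` if its equation can be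
brought, by a formal change of local coordinates (an algebra automorphism of `ℂ[[z₁,z₂,z₃]]`),
to the normal form `z₁² + z₂² + z₃^{k+1}`. -/
def IsAkSingularityAtOrigin (f : MvPowerSeries (Fin 3) ℂ) (k : ℕ) : Prop :=
  ∃ φ : MvPowerSeries (Fin 3) ℂ ≃ₐ[ℂ] MvPowerSeries (Fin 3) ℂ,
    φ f = (MvPowerSeries.X 0) ^ 2 + (MvPowerSeries.X 1) ^ 2 + (MvPowerSeries.X 2) ^ (k + 1)


noncomputable section AkDev

abbrev M3 := MvPowerSeries (Fin 3) ℂ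
abbrev P3 := MvPolynomial (Fin 3) ℂ

namespace AkDev

def deg (e : Fin 3 →₀ ℕ) : ℕ := ∑ i, e i

lemma deg_add (a b : Fin 3 →₀ ℕ) : deg (a + b) = deg a + deg b := by
  simp [deg, Finset.sum_add_distrib]

lemma deg_zero : deg 0 = 0 := by simp [deg]

lemma deg_eq_zero {e : Fin 3 →₀ ℕ} (h : deg e = 0) : e = 0 := by
  ext i
  have := Finset.sum_eq_zero_iff.mp h i (Finset.mem_univ i)
  simpa using this

lemma apply_le_deg (e : Fin 3 →₀ ℕ) (i : Fin 3) : e i ≤ deg e :=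
  Finset.single_le_sum (fun _ _ => Nat.zero_le _) (Finset.mem_univ i)

lemma deg_mono {a b : Fin 3 →₀ ℕ} (h : a ≤ b) : deg a ≤ deg b :=
  Finset.sum_le_sum (fun i _ => Finsupp.le_def.mp h i)

def constE (n : ℕ) : Fin 3 →₀ ℕ := Finsupp.equivFunOnFinite.symm (fun _ => n)

@[simp] lemma constE_apply (n : ℕ) (i : Fin 3) : constE n i = n := rfl

def cutoff (n : ℕ) : Finset (Fin 3 →₀ ℕ) := Finset.Iic (constE n)

lemma mem_cutoff {n : ℕ} {m : Fin 3 →₀ ℕ} : m ∈ cutoff n ↔ ∀ i, m i ≤ n := by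
  simp [cutoff, Finsupp.le_def]

lemma mem_cutoff_of_deg_le {n : ℕ} {m : Fin 3 →₀ ℕ} (h : deg m ≤ n) : m ∈ cutoff n :=
  mem_cutoff.mpr fun i => le_trans (apply_le_deg m i) h

lemma deg_gt_of_not_mem_cutoff {n : ℕ} {m : Fin 3 →₀ ℕ} (h : m ∉ cutoff n) : n < deg m := by
  by_contra hc
  exact h (mem_cutoff_of_deg_le (not_lt.mp hc))

/-- coefficients below total degree `n` vanish -/
def Vlow (n : ℕ) (u : M3) : Prop := ∀ e, deg e < n → MvPowerSeries.coeff e u = 0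

lemma Vlow.mono {n n' : ℕ} (h : n ≤ n') {u : M3} (hu : Vlow n' u) : Vlow n u :=
  fun e he => hu e (lt_of_lt_of_le he h)

lemma Vlow_zero (n : ℕ) : Vlow n (0 : M3) := fun e _ => by simp

lemma Vlow_of_constantCoeff {u : M3} (h : MvPowerSeries.constantCoeff u = 0) :
    Vlow 1 u := by
  intro e he
  have : e = 0 := deg_eq_zero (Nat.lt_one_iff.mp he)
  subst this
  simpa [MvPowerSeries.coeff_zero_eq_constantCoeff] using h

lemma Vlow.mul {p q : ℕ} {u v : M3} (hu : Vlow p u) (hv : Vlow q v) : Vlow (p + q) (u * v) := by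
  intro e he
  rw [MvPowerSeries.coeff_mul]
  apply Finset.sum_eq_zero
  rintro ⟨e1, e2⟩ hmem
  have hsum : e1 + e2 = e := Finset.HasAntidiagonal.mem_antidiagonal.mp hmem
  have hdeg : deg e1 + deg e2 < p + q := by rw [← deg_add, hsum]; exact he
  rcases lt_or_ge (deg e1) p with h1 | h1
  · rw [hu e1 h1, zero_mul]
  · have h2 : deg e2 < q := by omega
    rw [hv e2 h2, mul_zero]

lemma Vlow_monomial (m : Fin 3 →₀ ℕ) (a : ℂ) : Vlow (deg m) (MvPowerSeries.monomial m a) := by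
  intro e he
  rw [MvPowerSeries.coeff_monomial, if_neg]
  rintro rfl; exact absurd rfl (Nat.ne_of_lt he).elim

def sPow (s : Fin 3 → M3) (m : Fin 3 →₀ ℕ) : M3 := ∏ i, s i ^ m i

def Adm (s : Fin 3 → M3) : Prop := ∀ i, MvPowerSeries.constantCoeff (s i) = 0

lemma Vlow.pow {u : M3} (hu : Vlow 1 u) (k : ℕ) : Vlow k (u ^ k) := by
  induction k with
  | zero => intro e he; omega
  | succ k ih => rw [pow_succ]; exact ih.mul hu

lemma Vlow_sPow {s : Fin 3 → M3} (hs : Adm s) (m : Fin 3 →₀ ℕ) : Vlow (deg m) (sPow s m) := by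
  have : ∀ T : Finset (Fin 3), Vlow (∑ i ∈ T, m i) (∏ i ∈ T, s i ^ m i) := by
    intro T
    induction T using Finset.induction with
    | empty => intro e he; simp at he
    | @insert a T' hx ih =>
      rw [Finset.sum_insert hx, Finset.prod_insert hx]
      exact ((Vlow_of_constantCoeff (hs a)).pow (m a)).mul ih
  exact this Finset.univ

lemma coeff_sPow_eq_zero {s : Fin 3 → M3} (hs : Adm s) {m e : Fin 3 →₀ ℕ}
    (h : deg e < deg m) : MvPowerSeries.coeff e (sPow s m) = 0 :=
  Vlow_sPow hs m e h

def substFn (s : Fin 3 → M3) (f : M3) : M3 :=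
  fun e => ∑ m ∈ cutoff (deg e), MvPowerSeries.coeff m f * MvPowerSeries.coeff e (sPow s m)

lemma coeff_substFn (s : Fin 3 → M3) (f : M3) (e : Fin 3 →₀ ℕ) :
    MvPowerSeries.coeff e (substFn s f) =
      ∑ m ∈ cutoff (deg e), MvPowerSeries.coeff m f * MvPowerSeries.coeff e (sPow s m) := rfl

lemma coeff_substFn_superset {s : Fin 3 → M3} (hs : Adm s) (f : M3) (e : Fin 3 →₀ ℕ)
    {T : Finset (Fin 3 →₀ ℕ)} (hT : cutoff (deg e) ⊆ T) :
    MvPowerSeries.coeff e (substFn s f) =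
      ∑ m ∈ T, MvPowerSeries.coeff m f * MvPowerSeries.coeff e (sPow s m) := by
  rw [coeff_substFn]
  refine Finset.sum_subset hT ?_
  intro m _ hm
  rw [coeff_sPow_eq_zero hs (lt_of_le_of_lt (le_refl _) (deg_gt_of_not_mem_cutoff hm)), mul_zero]


lemma cutoff_mono {n n' : ℕ} (h : n ≤ n') : cutoff n ⊆ cutoff n' := by
  intro m hm
  exact mem_cutoff.mpr fun i => le_trans (mem_cutoff.mp hm i) h

lemma sPow_add (s : Fin 3 → M3) (a b : Fin 3 →₀ ℕ) :
    sPow s (a + b) = sPow s a * sPow s b := by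
  simp [sPow, pow_add, Finset.prod_mul_distrib]

lemma substFn_add (s : Fin 3 → M3) (f g : M3) :
    substFn s (f + g) = substFn s f + substFn s g := by
  apply MvPowerSeries.ext; intro e
  simp [coeff_substFn, map_add, add_mul, Finset.sum_add_distrib]

lemma substFn_smul (s : Fin 3 → M3) (r : ℂ) (f : M3) :
    substFn s (r • f) = r • substFn s f := by
  apply MvPowerSeries.ext; intro e
  simp [coeff_substFn, MvPowerSeries.coeff_smul, Finset.mul_sum, mul_assoc]

@[simp] lemma sPow_zero (s : Fin 3 → M3) : sPow s 0 = 1 := by simp [sPow]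

lemma substFn_one (s : Fin 3 → M3) : substFn s 1 = 1 := by
  apply MvPowerSeries.ext; intro e
  rw [coeff_substFn]
  rw [Finset.sum_eq_single (0 : Fin 3 →₀ ℕ)]
  · simp [MvPowerSeries.coeff_one]
  · intro m _ hm
    rw [MvPowerSeries.coeff_one, if_neg hm, zero_mul]
  · intro h
    exact absurd (mem_cutoff_of_deg_le (by simp [deg_zero])) h

lemma antidiagonal_eq_filter {n : ℕ} {m : Fin 3 →₀ ℕ} (hm : m ∈ cutoff n) :
    Finset.HasAntidiagonal.antidiagonal m =
      (cutoff n ×ˢ cutoff n).filter (fun p => p.1 + p.2 = m) := by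
  ext p
  simp only [Finset.HasAntidiagonal.mem_antidiagonal, Finset.mem_filter, Finset.mem_product]
  constructor
  · intro h
    refine ⟨⟨?_, ?_⟩, h⟩
    · exact Finset.mem_Iic.mpr (le_trans (le_trans le_self_add h.le) (Finset.mem_Iic.mp hm))
    · exact Finset.mem_Iic.mpr (le_trans (le_trans le_add_self h.le) (Finset.mem_Iic.mp hm))
  · exact fun h => h.2

lemma substFn_mul {s : Fin 3 → M3} (hs : Adm s) (f g : M3) :
    substFn s (f * g) = substFn s f * substFn s g := by
  apply MvPowerSeries.ext; intro e
  classical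
  set n := deg e with hn
  set T := cutoff n with hT
  set F : (Fin 3 →₀ ℕ) × (Fin 3 →₀ ℕ) → ℂ := fun p =>
    MvPowerSeries.coeff p.1 f * MvPowerSeries.coeff p.2 g *
      MvPowerSeries.coeff e (sPow s (p.1 + p.2)) with hF
  have hFzero : ∀ p : (Fin 3 →₀ ℕ) × (Fin 3 →₀ ℕ), p.1 + p.2 ∉ T → F p = 0 := by
    intro p hp
    rw [hF]
    simp only
    rw [coeff_sPow_eq_zero hs (deg_gt_of_not_mem_cutoff hp), mul_zero]
  have lhs_eq : MvPowerSeries.coeff e (substFn s (f * g)) = ∑ p ∈ T ×ˢ T, F p := by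
    rw [coeff_substFn]
    have step1 : ∀ m ∈ T,
        MvPowerSeries.coeff m (f * g) * MvPowerSeries.coeff e (sPow s m)
          = ∑ p ∈ T ×ˢ T, if p.1 + p.2 = m then F p else 0 := by
      intro m hm
      rw [MvPowerSeries.coeff_mul, Finset.sum_mul, antidiagonal_eq_filter hm, Finset.sum_filter]
      refine Finset.sum_congr rfl fun p hp => ?_
      split_ifs with h
      · rw [hF]; simp only [h]
      · rfl
    rw [Finset.sum_congr rfl step1, Finset.sum_comm]
    refine Finset.sum_congr rfl fun p _ => ?_
    rw [Finset.sum_ite_eq T (p.1 + p.2) (fun _ => F p)]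
    by_cases h : p.1 + p.2 ∈ T
    · rw [if_pos h]
    · rw [if_neg h, hFzero p h]
  have rhs_eq : MvPowerSeries.coeff e (substFn s f * substFn s g) = ∑ p ∈ T ×ˢ T, F p := by
    rw [MvPowerSeries.coeff_mul]
    have step1 : ∀ q : (Fin 3 →₀ ℕ) × (Fin 3 →₀ ℕ), q ∈ Finset.HasAntidiagonal.antidiagonal e →
        MvPowerSeries.coeff q.1 (substFn s f) * MvPowerSeries.coeff q.2 (substFn s g)
          = ∑ p ∈ T ×ˢ T,
              (MvPowerSeries.coeff p.1 f * MvPowerSeries.coeff q.1 (sPow s p.1)) *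
                (MvPowerSeries.coeff p.2 g * MvPowerSeries.coeff q.2 (sPow s p.2)) := by
      intro q hq
      have hsum : q.1 + q.2 = e := Finset.HasAntidiagonal.mem_antidiagonal.mp hq
      have h1 : cutoff (deg q.1) ⊆ T := cutoff_mono (by
        rw [hn, ← hsum, deg_add]; exact Nat.le_add_right _ _)
      have h2 : cutoff (deg q.2) ⊆ T := cutoff_mono (by
        rw [hn, ← hsum, deg_add]; exact Nat.le_add_left _ _)
      rw [coeff_substFn_superset hs f q.1 h1, coeff_substFn_superset hs g q.2 h2,
        Finset.sum_mul_sum, ← Finset.sum_product']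
    rw [Finset.sum_congr rfl step1, Finset.sum_comm]
    refine Finset.sum_congr rfl fun p _ => ?_
    rw [hF]
    simp only
    rw [sPow_add, MvPowerSeries.coeff_mul, Finset.mul_sum]
    refine Finset.sum_congr rfl fun q _ => ?_
    ring
  rw [lhs_eq, rhs_eq]


def substRingHom (s : Fin 3 → M3) (hs : Adm s) : M3 →+* M3 where
  toFun := substFn s
  map_one' := substFn_one s
  map_mul' := substFn_mul hs
  map_zero' := by
    have := substFn_smul s 0 0
    simpa using this
  map_add' := substFn_add s

def substAlgHom (s : Fin 3 → M3) (hs : Adm s) : M3 →ₐ[ℂ] M3 :=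
  AlgHom.mk' (substRingHom s hs) (substFn_smul s)

lemma substAlgHom_apply (s : Fin 3 → M3) (hs : Adm s) (f : M3) :
    substAlgHom s hs f = substFn s f := rfl

lemma sPow_single (s : Fin 3 → M3) (i : Fin 3) : sPow s (Finsupp.single i 1) = s i := by
  rw [sPow]
  rw [Finset.prod_eq_single i]
  · simp
  · intro j _ hj; simp [Finsupp.single_apply, (Ne.symm hj : ¬ i = j)]
  · intro h; exact absurd (Finset.mem_univ i) h

lemma deg_single (i : Fin 3) : deg (Finsupp.single i 1) = 1 := by
  simp [deg, Finsupp.single_apply]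

lemma substFn_X {s : Fin 3 → M3} (hs : Adm s) (i : Fin 3) :
    substFn s (MvPowerSeries.X i) = s i := by
  apply MvPowerSeries.ext; intro e
  rw [coeff_substFn]
  by_cases h0 : deg e = 0
  · have he : e = 0 := deg_eq_zero h0
    subst he
    rw [Finset.sum_eq_zero, MvPowerSeries.coeff_zero_eq_constantCoeff, hs i]
    intro m hm
    rw [MvPowerSeries.coeff_X]
    split_ifs with h
    · subst h
      exfalso
      have h1 := mem_cutoff.mp hm i
      rw [deg_zero] at h1
      simp [Finsupp.single_apply] at h1
    · rw [zero_mul]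
  · rw [Finset.sum_eq_single (Finsupp.single i 1)]
    · rw [MvPowerSeries.coeff_X, if_pos rfl, one_mul, sPow_single]
    · intro m _ hm
      rw [MvPowerSeries.coeff_X, if_neg hm, zero_mul]
    · intro h
      refine absurd (mem_cutoff_of_deg_le ?_) h
      rw [deg_single]
      omega

lemma substAlgHom_coe (s : Fin 3 → M3) (hs : Adm s) (p : P3) :
    substAlgHom s hs (↑p) = MvPolynomial.aeval s p := by
  have key : (substAlgHom s hs).comp (MvPolynomial.coeToMvPowerSeries.algHom ℂ)
      = MvPolynomial.aeval s := by
    apply MvPolynomial.algHom_ext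
    intro i
    simp only [AlgHom.comp_apply, MvPolynomial.coeToMvPowerSeries.algHom_apply,
      MvPolynomial.aeval_X]
    rw [MvPolynomial.coe_X, substAlgHom_apply]
    exact substFn_X hs i
  calc substAlgHom s hs (↑p)
      = ((substAlgHom s hs).comp (MvPolynomial.coeToMvPowerSeries.algHom ℂ)) p := by
        simp [MvPolynomial.coeToMvPowerSeries.algHom_apply]
    _ = MvPolynomial.aeval s p := by rw [key]

lemma substFn_coe (s : Fin 3 → M3) (hs : Adm s) (p : P3) :
    substFn s (↑p) = MvPolynomial.aeval s p := substAlgHom_coe s hs p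

lemma Adm_X : Adm (fun i => (MvPowerSeries.X i : M3)) := fun i => by
  simp [MvPowerSeries.constantCoeff_X]

lemma substFn_Xfam (f : M3) : substFn (fun i => MvPowerSeries.X i) f = f := by
  apply MvPowerSeries.ext; intro e
  rw [coeff_substFn]
  have hsP : ∀ m : Fin 3 →₀ ℕ, sPow (fun i => (MvPowerSeries.X i : M3)) m
      = MvPowerSeries.monomial m 1 := by
    intro m
    have h1 : sPow (fun i => (MvPowerSeries.X i : M3)) m
        = ((∏ i, (MvPolynomial.X i : P3) ^ m i : P3) : M3) := by
      rw [show ((∏ i, (MvPolynomial.X i : P3) ^ m i : P3) : M3)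
          = MvPolynomial.coeToMvPowerSeries.ringHom (∏ i, (MvPolynomial.X i : P3) ^ m i) from rfl,
        map_prod]
      simp [sPow]
    have h2 : (∏ i, (MvPolynomial.X i : P3) ^ m i : P3) = MvPolynomial.monomial m 1 := by
      rw [← MvPolynomial.prod_X_pow_eq_monomial]
      symm
      apply Finset.prod_subset (Finset.subset_univ _)
      intro i _ hi
      simp only [Finsupp.notMem_support_iff] at hi
      rw [hi, pow_zero]
    rw [h1, h2, MvPolynomial.coe_monomial]
  rw [Finset.sum_eq_single e]
  · rw [hsP, MvPowerSeries.coeff_monomial, if_pos rfl, mul_one]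
  · intro m _ hm
    rw [hsP, MvPowerSeries.coeff_monomial, if_neg (Ne.symm hm), mul_zero]
  · intro h
    exact absurd (mem_cutoff_of_deg_le le_rfl) h


lemma Adm_coe {t : Fin 3 → P3} (ht : ∀ i, MvPolynomial.constantCoeff (t i) = 0) :
    Adm (fun i => (↑(t i) : M3)) := by
  intro i
  rw [← MvPowerSeries.coeff_zero_eq_constantCoeff_apply, MvPolynomial.coeff_coe]
  exact ht i

lemma constantCoeff_aeval {s : Fin 3 → M3} (hs : Adm s) {p : P3}
    (hp : MvPolynomial.constantCoeff p = 0) :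
    MvPowerSeries.constantCoeff (MvPolynomial.aeval s p) = 0 := by
  have key : (MvPowerSeries.constantCoeff).comp
      ((MvPolynomial.aeval s : P3 →ₐ[ℂ] M3) : P3 →+* M3)
      = (MvPolynomial.constantCoeff : P3 →+* ℂ) := by
    apply MvPolynomial.ringHom_ext
    · intro r
      simp [MvPowerSeries.algebraMap_apply]
    · intro i
      simp [hs i]
  have h2 := congrArg (fun h : P3 →+* ℂ => h p) key
  simp only [RingHom.coe_comp, Function.comp_apply] at h2
  rw [show ((MvPolynomial.aeval s : P3 →ₐ[ℂ] M3) : P3 →+* M3) p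
    = MvPolynomial.aeval s p from rfl] at h2
  rw [h2]
  exact hp

lemma sPow_coe (t : Fin 3 → P3) (k : Fin 3 →₀ ℕ) :
    sPow (fun i => (↑(t i) : M3)) k = ((∏ i, t i ^ k i : P3) : M3) := by
  rw [show ((∏ i, t i ^ k i : P3) : M3)
      = MvPolynomial.coeToMvPowerSeries.ringHom (∏ i, t i ^ k i) from rfl, map_prod]
  simp [sPow]

lemma substFn_comp_poly {s : Fin 3 → M3} (hs : Adm s) (t : Fin 3 → P3)
    (ht : ∀ i, MvPolynomial.constantCoeff (t i) = 0) (f : M3) :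
    substFn s (substFn (fun i => (↑(t i) : M3)) f)
      = substFn (fun i => MvPolynomial.aeval s (t i)) f := by
  have ht' : Adm (fun i => (↑(t i) : M3)) := Adm_coe ht
  have hu : Adm (fun i => MvPolynomial.aeval s (t i)) :=
    fun i => constantCoeff_aeval hs (ht i)
  apply MvPowerSeries.ext; intro e
  set n := deg e with hn
  set T := cutoff n with hT
  set K := cutoff (3 * n) with hK
  have hTK : T ⊆ K := cutoff_mono (by omega)
  have hdegT : ∀ m ∈ T, deg m ≤ 3 * n := by
    intro m hm
    have : ∀ i, m i ≤ n := mem_cutoff.mp hm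
    calc deg m = m 0 + m 1 + m 2 := by
          rw [deg, Fin.sum_univ_three]
      _ ≤ 3 * n := by
          have h0 := this 0; have h1 := this 1; have h2 := this 2; omega
  rw [coeff_substFn]
  have step1 : ∀ m ∈ T,
      MvPowerSeries.coeff m (substFn (fun i => (↑(t i) : M3)) f) *
          MvPowerSeries.coeff e (sPow s m)
        = ∑ k ∈ K, MvPowerSeries.coeff k f *
            (MvPowerSeries.coeff m (sPow (fun i => (↑(t i) : M3)) k) *
              MvPowerSeries.coeff e (sPow s m)) := by
    intro m hm
    rw [coeff_substFn_superset ht' f m (cutoff_mono (hdegT m hm)), Finset.sum_mul]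
    refine Finset.sum_congr rfl fun k _ => ?_
    ring
  rw [Finset.sum_congr rfl step1, Finset.sum_comm]
  have step2 : ∀ k : Fin 3 →₀ ℕ,
      (∑ m ∈ T, MvPowerSeries.coeff k f *
        (MvPowerSeries.coeff m (sPow (fun i => (↑(t i) : M3)) k) *
          MvPowerSeries.coeff e (sPow s m)))
        = MvPowerSeries.coeff k f *
            MvPowerSeries.coeff e (sPow (fun i => MvPolynomial.aeval s (t i)) k) := by
    intro k
    rw [← Finset.mul_sum]
    congr 1
    have : (∑ m ∈ T, MvPowerSeries.coeff m (sPow (fun i => (↑(t i) : M3)) k) *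
        MvPowerSeries.coeff e (sPow s m))
        = MvPowerSeries.coeff e (substFn s (sPow (fun i => (↑(t i) : M3)) k)) := by
      rw [coeff_substFn]
    rw [this, sPow_coe, substFn_coe s hs, map_prod]
    simp only [map_pow]
    rw [sPow]
  rw [Finset.sum_congr rfl (fun k _ => step2 k)]
  rw [← coeff_substFn_superset hu f e hTK]

lemma coe_aeval (sp : Fin 3 → P3) (p : P3) :
    MvPolynomial.aeval (fun j => (↑(sp j) : M3)) p = ((MvPolynomial.aeval sp p : P3) : M3) := by
  have key : (MvPolynomial.aeval (fun j => (↑(sp j) : M3)) : P3 →ₐ[ℂ] M3)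
      = (MvPolynomial.coeToMvPowerSeries.algHom ℂ).comp (MvPolynomial.aeval sp) := by
    apply MvPolynomial.algHom_ext
    intro i
    simp [MvPolynomial.coeToMvPowerSeries.algHom_apply]
  rw [key]
  simp [MvPolynomial.coeToMvPowerSeries.algHom_apply]

/-- equivalence induced by a pair of mutually inverse polynomial substitutions -/
def polySubstEquiv (sp tp : Fin 3 → P3)
    (hsp : ∀ i, MvPolynomial.constantCoeff (sp i) = 0)
    (htp : ∀ i, MvPolynomial.constantCoeff (tp i) = 0)
    (h1 : ∀ i, MvPolynomial.aeval sp (tp i) = MvPolynomial.X i)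
    (h2 : ∀ i, MvPolynomial.aeval tp (sp i) = MvPolynomial.X i) : M3 ≃ₐ[ℂ] M3 := by
  refine AlgEquiv.ofAlgHom (substAlgHom _ (Adm_coe hsp)) (substAlgHom _ (Adm_coe htp)) ?_ ?_
  · apply AlgHom.ext; intro f
    simp only [AlgHom.comp_apply, substAlgHom_apply, AlgHom.id_apply]
    rw [substFn_comp_poly (Adm_coe hsp) tp htp f]
    have : (fun i => MvPolynomial.aeval (fun j => (↑(sp j) : M3)) (tp i))
        = fun i => MvPowerSeries.X i := by
      funext i
      rw [coe_aeval, h1 i, MvPolynomial.coe_X]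
    rw [this, substFn_Xfam]
  · apply AlgHom.ext; intro f
    simp only [AlgHom.comp_apply, substAlgHom_apply, AlgHom.id_apply]
    rw [substFn_comp_poly (Adm_coe htp) sp hsp f]
    have : (fun i => MvPolynomial.aeval (fun j => (↑(tp j) : M3)) (sp i))
        = fun i => MvPowerSeries.X i := by
      funext i
      rw [coe_aeval, h2 i, MvPolynomial.coe_X]
    rw [this, substFn_Xfam]

lemma polySubstEquiv_apply (sp tp : Fin 3 → P3) (hsp htp h1 h2) (f : M3) :
    polySubstEquiv sp tp hsp htp h1 h2 f = substFn (fun i => (↑(sp i) : M3)) f := rfl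


lemma Vlow.add {n : ℕ} {u v : M3} (hu : Vlow n u) (hv : Vlow n v) : Vlow n (u + v) := by
  intro e he; rw [map_add, hu e he, hv e he, add_zero]

lemma Vlow.neg {n : ℕ} {u : M3} (hu : Vlow n u) : Vlow n (-u) := by
  intro e he; rw [map_neg, hu e he, neg_zero]

lemma Vlow.sub {n : ℕ} {u v : M3} (hu : Vlow n u) (hv : Vlow n v) : Vlow n (u - v) := by
  rw [sub_eq_add_neg]; exact hu.add hv.neg

section Wsection

variable {w r : Fin 3 → M3} (hw : ∀ i, w i = MvPowerSeries.X i + r i)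
  (hr : ∀ i, Vlow 2 (r i))

include hw hr

lemma Adm_w : Adm w := by
  intro i
  rw [hw i, map_add, MvPowerSeries.constantCoeff_X, zero_add,
    ← MvPowerSeries.coeff_zero_eq_constantCoeff_apply]
  exact hr i 0 (by rw [deg_zero]; omega)

lemma sPow_sub_monomial :
    ∀ m : Fin 3 →₀ ℕ, Vlow (deg m + 1) (sPow w m - MvPowerSeries.monomial m 1) := by
  suffices H : ∀ n : ℕ, ∀ m : Fin 3 →₀ ℕ, deg m = n →
      Vlow (deg m + 1) (sPow w m - MvPowerSeries.monomial m 1) by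
    intro m; exact H (deg m) m rfl
  intro n
  induction n with
  | zero =>
    intro m hm
    have : m = 0 := deg_eq_zero hm
    subst this
    rw [sPow_zero]
    have : (MvPowerSeries.monomial (0 : Fin 3 →₀ ℕ) (1 : ℂ)) = 1 := by
      simp
    rw [this, sub_self]
    exact Vlow_zero _
  | succ n ih =>
    intro m hm
    have hex : ∃ i, m i ≠ 0 := by
      by_contra hc
      push_neg at hc
      have : m = 0 := by ext i; exact hc i
      rw [this, deg_zero] at hm
      omega
    obtain ⟨i, hi⟩ := hex
    set m' := m - Finsupp.single i 1 with hm'def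
    have hsplit : m' + Finsupp.single i 1 = m := by
      ext j
      simp only [Finsupp.add_apply, hm'def, Finsupp.tsub_apply, Finsupp.single_apply]
      by_cases h : i = j
      · subst h; have : 1 ≤ m i := Nat.one_le_iff_ne_zero.mpr hi; simp; omega
      · simp [h]
    have hdegm' : deg m' = n := by
      have := deg_add m' (Finsupp.single i 1)
      rw [hsplit, deg_single] at this
      omega
    have hsPow : sPow w m = sPow w m' * w i := by
      rw [← hsplit, sPow_add, sPow_single]
    have hmon : (MvPowerSeries.monomial m' (1 : ℂ)) * MvPowerSeries.X i
        = MvPowerSeries.monomial m 1 := by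
      rw [MvPowerSeries.X_def, MvPowerSeries.monomial_mul_monomial, mul_one, hsplit]
    have expand : sPow w m - MvPowerSeries.monomial m 1
        = (sPow w m' - MvPowerSeries.monomial m' 1) * w i
            + MvPowerSeries.monomial m' 1 * r i := by
      rw [hsPow, hw i, ← hmon]
      ring
    rw [expand, hm]
    have h1 : Vlow (n + 2) ((sPow w m' - MvPowerSeries.monomial m' 1) * w i) := by
      have hV1 : Vlow 1 (w i) := Vlow_of_constantCoeff (Adm_w hw hr i)
      have := (ih m' hdegm')
      rw [hdegm'] at this
      have := this.mul hV1
      simpa using this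
    have h2 : Vlow (n + 2) (MvPowerSeries.monomial m' 1 * r i) := by
      have := (Vlow_monomial m' (1 : ℂ)).mul (hr i)
      rw [hdegm'] at this
      exact this
    exact h1.add h2

lemma coeff_sPow_deg_eq {m e : Fin 3 →₀ ℕ} (h : deg e = deg m) :
    MvPowerSeries.coeff e (sPow w m) = if e = m then 1 else 0 := by
  have hD := sPow_sub_monomial hw hr m e (by omega)
  rw [map_sub, sub_eq_zero] at hD
  rw [hD, MvPowerSeries.coeff_monomial]

lemma substFn_w_injective : Function.Injective (substFn w) := by
  have hAdm : Adm w := Adm_w hw hr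
  intro f g hfg
  by_contra hne
  have hex : ∃ n : ℕ, ∃ e : Fin 3 →₀ ℕ, deg e = n ∧ MvPowerSeries.coeff e (f - g) ≠ 0 := by
    have : f - g ≠ 0 := sub_ne_zero.mpr hne
    obtain ⟨e, he⟩ : ∃ e, MvPowerSeries.coeff e (f - g) ≠ 0 := by
      by_contra hc
      push_neg at hc
      exact this (MvPowerSeries.ext hc)
    exact ⟨deg e, e, rfl, he⟩
  classical
  set n₀ := Nat.find hex with hn₀
  obtain ⟨e₀, he₀deg, he₀⟩ := Nat.find_spec hex
  have hmin : ∀ e : Fin 3 →₀ ℕ, deg e < n₀ → MvPowerSeries.coeff e (f - g) = 0 := by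
    intro e he
    by_contra hc
    exact absurd ⟨e, rfl, hc⟩ (Nat.find_min hex he)
  have hzero : substFn w (f - g) = 0 := by
    have h := map_sub (substRingHom w hAdm) f g
    have h2 : substRingHom w hAdm (f - g) = 0 := by
      rw [h]
      show substFn w f - substFn w g = 0
      rw [hfg, sub_self]
    exact h2
  have : MvPowerSeries.coeff e₀ (substFn w (f - g)) = MvPowerSeries.coeff e₀ (f - g) := by
    rw [coeff_substFn]
    rw [Finset.sum_eq_single e₀]
    · rw [coeff_sPow_deg_eq hw hr (by rw [he₀deg]), if_pos rfl, mul_one]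
    · intro m hm hne'
      rcases lt_trichotomy (deg m) n₀ with h | h | h
      · rw [hmin m h, zero_mul]
      · rw [coeff_sPow_deg_eq hw hr (by omega), if_neg (fun hc => hne' hc.symm), mul_zero]
      · rw [coeff_sPow_eq_zero hAdm (by omega), mul_zero]
    · intro hne'
      exact absurd (mem_cutoff_of_deg_le (by omega)) hne'
  rw [hzero] at this
  simp only [map_zero] at this
  exact he₀ this.symm

end Wsection


noncomputable def invCoeff (w : Fin 3 → M3) (g : M3) : (Fin 3 →₀ ℕ) → ℂ := fun e =>
  MvPowerSeries.coeff e g -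
    ∑ m ∈ ((cutoff (deg e)).filter (fun m => deg m < deg e)).attach,
      invCoeff w g m.1 * MvPowerSeries.coeff e (sPow w m.1)
termination_by e => deg e
decreasing_by
  exact (Finset.mem_filter.mp m.2).2

section Wsection2

variable {w r : Fin 3 → M3} (hw : ∀ i, w i = MvPowerSeries.X i + r i)
  (hr : ∀ i, Vlow 2 (r i))

include hw hr

lemma substFn_w_surjective : Function.Surjective (substFn w) := by
  have hAdm : Adm w := Adm_w hw hr
  intro g
  refine ⟨(@id M3 (invCoeff w g)), ?_⟩
  apply MvPowerSeries.ext; intro e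
  have hcoeffF : ∀ e', MvPowerSeries.coeff e' (@id M3 (invCoeff w g)) = invCoeff w g e' :=
    fun _ => rfl
  rw [coeff_substFn]
  set n := deg e with hn
  rw [← Finset.sum_filter_add_sum_filter_not (cutoff n) (fun m => deg m < n)]
  have hsecond : (∑ m ∈ (cutoff n).filter (fun m => ¬ deg m < n),
      MvPowerSeries.coeff m (@id M3 (invCoeff w g)) * MvPowerSeries.coeff e (sPow w m))
      = invCoeff w g e := by
    rw [Finset.sum_eq_single e]
    · rw [hcoeffF, coeff_sPow_deg_eq hw hr rfl, if_pos rfl, mul_one]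
    · intro m hm hne
      have hmge : ¬ deg m < n := (Finset.mem_filter.mp hm).2
      rcases eq_or_lt_of_le (not_lt.mp hmge) with h | h
      · rw [coeff_sPow_deg_eq hw hr (by omega), if_neg (fun hc => hne hc.symm), mul_zero]
      · rw [coeff_sPow_eq_zero hAdm (by omega), mul_zero]
    · intro hne
      refine absurd ?_ hne
      rw [Finset.mem_filter]
      exact ⟨mem_cutoff_of_deg_le le_rfl, by omega⟩
  rw [hsecond]
  have hunfold : invCoeff w g e = MvPowerSeries.coeff e g -
      ∑ m ∈ ((cutoff n).filter (fun m => deg m < n)).attach,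
        invCoeff w g m.1 * MvPowerSeries.coeff e (sPow w m.1) := by
    rw [invCoeff]
  rw [hunfold]
  rw [← Finset.sum_attach (((cutoff n)).filter (fun m => deg m < n))
    (fun m => MvPowerSeries.coeff m (@id M3 (invCoeff w g)) * MvPowerSeries.coeff e (sPow w m))]
  simp only [hcoeffF]
  ring

lemma substFn_w_bijective : Function.Bijective (substFn w) :=
  ⟨substFn_w_injective hw hr, substFn_w_surjective hw hr⟩

end Wsection2


lemma substFn_coe_coe {sp : Fin 3 → P3} (hsp : ∀ i, MvPolynomial.constantCoeff (sp i) = 0)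
    (p : P3) :
    substFn (fun i => (↑(sp i) : M3)) (↑p) = ((MvPolynomial.aeval sp p : P3) : M3) := by
  rw [substFn_coe _ (Adm_coe hsp), coe_aeval]

end AkDev
end AkDev

noncomputable section Final

open MvPolynomial AkDev

theorem stmt_1' (d : ℕ) (hd : 3 ≤ d)
    (l₁ l₂ l₃ : MvPolynomial (Fin 3) ℂ)
    (hl₁0 : MvPolynomial.coeff 0 l₁ ≠ 0) :
    ∃ φ : MvPowerSeries (Fin 3) ℂ ≃ₐ[ℂ] MvPowerSeries (Fin 3) ℂ,
      φ ((X 1 * (X 2 * l₃ + X 1 * l₂ + X 0 * l₁) + X 2 ^ d : MvPolynomial (Fin 3) ℂ) :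
          MvPowerSeries (Fin 3) ℂ)
        = (MvPowerSeries.X 0) ^ 2 + (MvPowerSeries.X 1) ^ 2 + (MvPowerSeries.X 2) ^ (d - 1 + 1) := by
  classical
  set a := MvPolynomial.coeff 0 l₁ with ha
  set b := MvPolynomial.coeff 0 l₂ with hb
  set c := MvPolynomial.coeff 0 l₃ with hc
  have hd1 : d - 1 + 1 = d := by omega
  -- constant relations
  have hCa : (C a : P3) * C a⁻¹ = 1 := by
    rw [← map_mul, mul_inv_cancel₀ hl₁0, map_one]
  have hI : (C Complex.I : P3) * C Complex.I = -1 := by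
    rw [← map_mul, Complex.I_mul_I, map_neg, map_one]
  have hhalf : (C (2⁻¹ : ℂ) : P3) * 2 = 1 := by
    rw [show (2 : P3) = C (2 : ℂ) from (map_ofNat C 2).symm, ← map_mul]
    norm_num
  -- the polynomial substitution families
  set sA : Fin 3 → P3 :=
    ![C (2⁻¹ : ℂ) * (X 0 + X 1), C Complex.I * C (2⁻¹ : ℂ) * (X 1 - X 0), X 2] with hsAdef
  set tA : Fin 3 → P3 :=
    ![X 0 + C Complex.I * X 1, X 0 - C Complex.I * X 1, X 2] with htAdef
  set sB : Fin 3 → P3 :=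
    ![C a * X 0 + C b * X 1 + C c * X 2, X 1, X 2] with hsBdef
  set tB : Fin 3 → P3 :=
    ![C a⁻¹ * (X 0 - C b * X 1 - C c * X 2), X 1, X 2] with htBdef
  set Q : P3 := X 2 * (l₃ - C c) + X 1 * (l₂ - C b) + X 0 * (l₁ - C a) with hQdef
  set wp : Fin 3 → P3 := ![X 0 + C a⁻¹ * Q, X 1, X 2] with hwpdef
  -- constant coefficient checks
  have hsA0 : ∀ i, MvPolynomial.constantCoeff (sA i) = 0 := by
    intro i; fin_cases i <;> simp [hsAdef]
  have htA0 : ∀ i, MvPolynomial.constantCoeff (tA i) = 0 := by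
    intro i; fin_cases i <;> simp [htAdef]
  have hsB0 : ∀ i, MvPolynomial.constantCoeff (sB i) = 0 := by
    intro i; fin_cases i <;> simp [hsBdef]
  have htB0 : ∀ i, MvPolynomial.constantCoeff (tB i) = 0 := by
    intro i; fin_cases i <;> simp [htBdef]
  have hQ0 : MvPolynomial.constantCoeff Q = 0 := by
    simp [hQdef, map_add, map_mul, map_sub, constantCoeff_X, constantCoeff_C,
      constantCoeff_eq, ha, hb, hc]
  have hwp0 : ∀ i, MvPolynomial.constantCoeff (wp i) = 0 := by
    intro i; fin_cases i <;> simp [hwpdef, hQ0]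
  -- inverse identities for A
  have hA1 : ∀ i, MvPolynomial.aeval sA (tA i) = X i := by
    intro i; fin_cases i
    · simp only [Fin.zero_eta, Fin.mk_one, Matrix.cons_val_zero, Matrix.cons_val_one,
        Matrix.head_cons, Matrix.cons_val_two, Matrix.tail_cons, map_add, map_sub, map_mul,
        aeval_X, aeval_C, algebraMap_eq, htAdef, hsAdef]
      linear_combination (C (2⁻¹ : ℂ) * (X 1 - X 0) : P3) * hI + (X 0 : P3) * hhalf
    · simp only [Fin.zero_eta, Fin.mk_one, Matrix.cons_val_zero, Matrix.cons_val_one,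
        Matrix.head_cons, Matrix.cons_val_two, Matrix.tail_cons, map_add, map_sub, map_mul,
        aeval_X, aeval_C, algebraMap_eq, htAdef, hsAdef]
      linear_combination (-(C (2⁻¹ : ℂ)) * (X 1 - X 0) : P3) * hI + (X 1 : P3) * hhalf
    · simp [htAdef, hsAdef]
  have hA2 : ∀ i, MvPolynomial.aeval tA (sA i) = X i := by
    intro i; fin_cases i
    · simp only [Fin.zero_eta, Fin.mk_one, Matrix.cons_val_zero, Matrix.cons_val_one,
        Matrix.head_cons, Matrix.cons_val_two, Matrix.tail_cons, map_add, map_sub, map_mul,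
        aeval_X, aeval_C, algebraMap_eq, htAdef, hsAdef]
      linear_combination (X 0 : P3) * hhalf
    · simp only [Fin.zero_eta, Fin.mk_one, Matrix.cons_val_zero, Matrix.cons_val_one,
        Matrix.head_cons, Matrix.cons_val_two, Matrix.tail_cons, map_add, map_sub, map_mul,
        aeval_X, aeval_C, algebraMap_eq, htAdef, hsAdef]
      linear_combination (-2 * C (2⁻¹ : ℂ) * X 1 : P3) * hI + (X 1 : P3) * hhalf
    · simp [htAdef, hsAdef]
  -- inverse identities for B
  have hB1 : ∀ i, MvPolynomial.aeval sB (tB i) = X i := by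
    intro i; fin_cases i
    · simp only [Fin.zero_eta, Fin.mk_one, Matrix.cons_val_zero, Matrix.cons_val_one,
        Matrix.head_cons, Matrix.cons_val_two, Matrix.tail_cons, map_add, map_sub, map_mul,
        aeval_X, aeval_C, algebraMap_eq, htBdef, hsBdef]
      linear_combination (X 0 : P3) * hCa
    · simp [htBdef, hsBdef]
    · simp [htBdef, hsBdef]
  have hB2 : ∀ i, MvPolynomial.aeval tB (sB i) = X i := by
    intro i; fin_cases i
    · simp only [Fin.zero_eta, Fin.mk_one, Matrix.cons_val_zero, Matrix.cons_val_one,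
        Matrix.head_cons, Matrix.cons_val_two, Matrix.tail_cons, map_add, map_sub, map_mul,
        aeval_X, aeval_C, algebraMap_eq, htBdef, hsBdef]
      linear_combination ((X 0 - C b * X 1 - C c * X 2 : P3)) * hCa
    · simp [htBdef, hsBdef]
    · simp [htBdef, hsBdef]
  -- the three automorphisms
  set EA : M3 ≃ₐ[ℂ] M3 := polySubstEquiv sA tA hsA0 htA0 hA1 hA2 with hEA
  set EB : M3 ≃ₐ[ℂ] M3 := polySubstEquiv sB tB hsB0 htB0 hB1 hB2 with hEB
  set w : Fin 3 → M3 := fun i => (↑(wp i) : M3) with hwdef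
  set rr : Fin 3 → M3 := ![(↑(C a⁻¹ * Q : P3) : M3), 0, 0] with hrrdef
  have hw : ∀ i, w i = MvPowerSeries.X i + rr i := by
    intro i; fin_cases i
    · simp only [Fin.zero_eta, hwdef, hwpdef, hrrdef, Matrix.cons_val_zero]
      rw [MvPolynomial.coe_add, MvPolynomial.coe_X]
    · simp only [Fin.mk_one, hwdef, hwpdef, hrrdef, Matrix.cons_val_one, Matrix.head_cons,
        Matrix.cons_val_zero]
      rw [MvPolynomial.coe_X, add_zero]
    · show ((wp 2 : P3) : M3) = MvPowerSeries.X 2 + rr 2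
      simp only [hwdef, hwpdef, hrrdef, Matrix.cons_val_two, Matrix.tail_cons, Matrix.head_cons]
      rw [MvPolynomial.coe_X, add_zero]
  have hVcoe : ∀ p : P3, MvPolynomial.constantCoeff p = 0 → Vlow 1 ((p : P3) : M3) := by
    intro p hp
    apply Vlow_of_constantCoeff
    rw [← MvPowerSeries.coeff_zero_eq_constantCoeff_apply, MvPolynomial.coeff_coe]
    rw [constantCoeff_eq] at hp
    exact hp
  have hrr : ∀ i, Vlow 2 (rr i) := by
    intro i; fin_cases i
    · simp only [Fin.zero_eta, hrrdef, Matrix.cons_val_zero]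
      rw [MvPolynomial.coe_mul]
      have hQ2 : Vlow 2 ((Q : P3) : M3) := by
        rw [hQdef, MvPolynomial.coe_add, MvPolynomial.coe_add, MvPolynomial.coe_mul,
          MvPolynomial.coe_mul, MvPolynomial.coe_mul]
        refine Vlow.add (Vlow.add ?_ ?_) ?_
        · exact (hVcoe _ (by simp)).mul (hVcoe _ (by simp [constantCoeff_eq, hc]))
        · exact (hVcoe _ (by simp)).mul (hVcoe _ (by simp [constantCoeff_eq, hb]))
        · exact (hVcoe _ (by simp)).mul (hVcoe _ (by simp [constantCoeff_eq, ha]))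
      have : Vlow (0 + 2) (((C a⁻¹ : P3) : M3) * ((Q : P3) : M3)) :=
        Vlow.mul (fun e he => by omega) hQ2
      simpa using this
    · simp only [Fin.mk_one, hrrdef, Matrix.cons_val_one, Matrix.head_cons]
      exact Vlow_zero 2
    · show Vlow 2 (rr 2)
      simp only [hrrdef, Matrix.cons_val_two, Matrix.tail_cons, Matrix.head_cons]
      exact Vlow_zero 2
  set Ew : M3 ≃ₐ[ℂ] M3 :=
    AlgEquiv.ofBijective (substAlgHom w (Adm_w hw hrr)) (substFn_w_bijective hw hrr) with hEw
  set ψ : M3 ≃ₐ[ℂ] M3 := (EA.trans EB).trans Ew with hψdef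
  -- polynomial computations
  set Np : P3 := X 0 ^ 2 + X 1 ^ 2 + X 2 ^ d with hNp
  set P1 : P3 := X 0 * X 1 + X 2 ^ d with hP1def
  set P2 : P3 := (C a * X 0 + C b * X 1 + C c * X 2) * X 1 + X 2 ^ d with hP2def
  set fp : P3 := X 1 * (X 2 * l₃ + X 1 * l₂ + X 0 * l₁) + X 2 ^ d with hfp
  have hstep1 : MvPolynomial.aeval sA Np = P1 := by
    simp only [hNp, hsAdef, map_add, map_pow, map_mul, map_sub, aeval_X, aeval_C, algebraMap_eq,
      Matrix.cons_val_zero, Matrix.cons_val_one, Matrix.head_cons, Matrix.cons_val_two,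
      Matrix.tail_cons, hP1def]
    linear_combination (C (2⁻¹ : ℂ) * C (2⁻¹ : ℂ) * (X 1 - X 0) ^ 2 : P3) * hI +
      (X 0 * X 1 * (2 * C (2⁻¹ : ℂ) + 1) : P3) * hhalf
  have hstep2 : MvPolynomial.aeval sB P1 = P2 := by
    simp only [hP1def, hsBdef, map_add, map_pow, map_mul, aeval_X, aeval_C, algebraMap_eq,
      Matrix.cons_val_zero, Matrix.cons_val_one, Matrix.head_cons, Matrix.cons_val_two,
      Matrix.tail_cons, hP2def]
  have hstep3 : MvPolynomial.aeval wp P2 = fp := by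
    simp only [hP2def, hwpdef, map_add, map_pow, map_mul, aeval_X, aeval_C, algebraMap_eq,
      Matrix.cons_val_zero, Matrix.cons_val_one, Matrix.head_cons, Matrix.cons_val_two,
      Matrix.tail_cons, hfp]
    linear_combination (X 1 * Q : P3) * hCa
  -- power series computation
  have hEAstep : EA ((Np : P3) : M3) = ((P1 : P3) : M3) := by
    rw [hEA, polySubstEquiv_apply, substFn_coe_coe hsA0, hstep1]
  have hEBstep : EB ((P1 : P3) : M3) = ((P2 : P3) : M3) := by
    rw [hEB, polySubstEquiv_apply, substFn_coe_coe hsB0, hstep2]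
  have hEwstep : Ew ((P2 : P3) : M3) = ((fp : P3) : M3) := by
    rw [show Ew ((P2 : P3) : M3) = substFn w ((P2 : P3) : M3) from rfl]
    rw [hwdef, substFn_coe_coe hwp0, hstep3]
  have hψN : ψ ((Np : P3) : M3) = ((fp : P3) : M3) := by
    rw [hψdef, AlgEquiv.trans_apply, AlgEquiv.trans_apply, hEAstep, hEBstep, hEwstep]
  refine ⟨ψ.symm, ?_⟩
  have hfcoe : ((X 1 * (X 2 * l₃ + X 1 * l₂ + X 0 * l₁) + X 2 ^ d : MvPolynomial (Fin 3) ℂ) :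
      MvPowerSeries (Fin 3) ℂ) = ((fp : P3) : M3) := by rw [hfp]
  have hNcoe : ((Np : P3) : M3)
      = (MvPowerSeries.X 0) ^ 2 + (MvPowerSeries.X 1) ^ 2 + (MvPowerSeries.X 2) ^ (d - 1 + 1) := by
    rw [hNp, hd1]
    push_cast
    rfl
  rw [hfcoe, ← hψN, AlgEquiv.symm_apply_apply, hNcoe]

end Final

/-- For `d ≥ 3`, the surface germ `x₂·(x₃·l₃(x₁,x₂,x₃) + x₂·l₂(x₁,x₂) + x₁·l₁(x₁)) + x₃^d = 0`
with `l₁(0) ≠ 0` has an `A_{d-1}`-singularity at the origin.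
(Variables: `x₁ = X 0`, `x₂ = X 1`, `x₃ = X 2`.) -/
theorem stmt_1 (d : ℕ) (hd : 3 ≤ d)
    (l₁ l₂ l₃ : MvPolynomial (Fin 3) ℂ)
    (hl₁ : ∀ m ∈ l₁.support, m 1 = 0 ∧ m 2 = 0)
    (hl₂ : ∀ m ∈ l₂.support, m 2 = 0)
    (hl₁0 : MvPolynomial.coeff 0 l₁ ≠ 0) :
    IsAkSingularityAtOrigin
      ((X 1 * (X 2 * l₃ + X 1 * l₂ + X 0 * l₁) + X 2 ^ d : MvPolynomial (Fin 3) ℂ) :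
        MvPowerSeries (Fin 3) ℂ) (d - 1) := by
  exact stmt_1' d hd l₁ l₂ l₃ hl₁0
end

section
/- Let X ⊂ ℙ^N be an irreducible reduced hypersurface and let Λ₁, Λ₂ be two distinct (N−2)-dimensional linear subspaces contained in X, with corresponding hyperplanes Π₁, Π₂ such that Πᵢ ∩ X = d·Λᵢ as divisors on Πᵢ. Then dim(Λ₁ ∩ Λ₂) = N−3 and dim⟨Λ₁, Λ₂⟩ = N−1. -/
open MvPolynomial Module

/-- `Π ∩ X = d·Λ` as divisors on the hyperplane `Pl`: the restriction of the defining
polynomial `f` of `X` to `Pl` equals, up to a nonzero scalar, the `d`-th power of a linear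
form cutting out `Λ` inside `Pl`. -/
def DivisorCond (N d : ℕ) (f : MvPolynomial (Fin (N + 1)) ℂ)
    (Λ Pl : Submodule ℂ (Fin (N + 1) → ℂ)) : Prop :=
  ∃ (ℓ : (Fin (N + 1) → ℂ) →ₗ[ℂ] ℂ) (c : ℂ), c ≠ 0 ∧
    Λ = Pl ⊓ LinearMap.ker ℓ ∧
    ∀ v ∈ Pl, MvPolynomial.eval v f = c * (ℓ v) ^ d

/-- If `Λ₁ ≠ Λ₂` are `(N-2)`-dimensional linear subspaces (vector dimension `N-1`) of an
irreducible hypersurface `X ⊂ ℙ^N` with hyperplanes `Π₁, Π₂` such that `Πᵢ ∩ X = d·Λᵢ`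
as divisors, then `dim(Λ₁ ∩ Λ₂) = N-3` and `dim⟨Λ₁,Λ₂⟩ = N-1` (projectively; in vector
space dimensions: `N-2` and `N`). -/
theorem stmt_5 (N d : ℕ) (hN : 3 ≤ N) (hd : 3 ≤ d)
    (f : MvPolynomial (Fin (N + 1)) ℂ) (hf : f.IsHomogeneous d) (hirr : Irreducible f)
    (Λ₁ Λ₂ Pl₁ Pl₂ : Submodule ℂ (Fin (N + 1) → ℂ))
    (hΛ₁ : finrank ℂ Λ₁ = N - 1) (hΛ₂ : finrank ℂ Λ₂ = N - 1)
    (hPl₁ : finrank ℂ Pl₁ = N) (hPl₂ : finrank ℂ Pl₂ = N)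
    (hle₁ : Λ₁ ≤ Pl₁) (hle₂ : Λ₂ ≤ Pl₂)
    (hne : Λ₁ ≠ Λ₂)
    (hdiv₁ : DivisorCond N d f Λ₁ Pl₁) (hdiv₂ : DivisorCond N d f Λ₂ Pl₂) :
    finrank ℂ ↥(Λ₁ ⊓ Λ₂) = N - 2 ∧ finrank ℂ ↥(Λ₁ ⊔ Λ₂) = N := by
  obtain ⟨ℓ₁, c₁, hc₁, heq₁, hev₁⟩ := hdiv₁
  obtain ⟨ℓ₂, c₂, hc₂, heq₂, hev₂⟩ := hdiv₂
  have hd0 : d ≠ 0 := by omega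
  -- f vanishes on Λ₁
  have hvan : ∀ v ∈ Λ₁, MvPolynomial.eval v f = 0 := by
    intro v hv
    rw [heq₁] at hv
    rw [hev₁ v hv.1, LinearMap.mem_ker.mp hv.2, zero_pow hd0, mul_zero]
  -- Λ₁ ⊓ Pl₂ ≤ Λ₂
  have hkey : Λ₁ ⊓ Pl₂ ≤ Λ₂ := by
    intro v hv
    rw [heq₂]
    refine ⟨hv.2, ?_⟩
    have h0 : c₂ * (ℓ₂ v) ^ d = 0 := by
      rw [← hev₂ v hv.2, hvan v hv.1]
    have := (mul_eq_zero.mp h0).resolve_left hc₂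
    exact LinearMap.mem_ker.mpr (pow_eq_zero_iff hd0 |>.mp this)
  have hkey' : Λ₁ ⊓ Pl₂ ≤ Λ₁ ⊓ Λ₂ := le_inf inf_le_left hkey
  -- ambient dimension
  have hamb : finrank ℂ (Fin (N + 1) → ℂ) = N + 1 := by
    simp [Module.finrank_pi]
  -- dim (Λ₁ ⊓ Pl₂) ≥ N - 2
  have hdim1 : finrank ℂ ↥(Λ₁ ⊔ Pl₂) + finrank ℂ ↥(Λ₁ ⊓ Pl₂)
      = finrank ℂ Λ₁ + finrank ℂ Pl₂ := Submodule.finrank_sup_add_finrank_inf_eq _ _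
  have hle_amb : finrank ℂ ↥(Λ₁ ⊔ Pl₂) ≤ N + 1 := le_trans (Submodule.finrank_le _) (le_of_eq hamb)
  have hlow : N - 2 ≤ finrank ℂ ↥(Λ₁ ⊓ Pl₂) := by omega
  have hlow' : N - 2 ≤ finrank ℂ ↥(Λ₁ ⊓ Λ₂) :=
    le_trans hlow (Submodule.finrank_mono hkey')
  -- dim (Λ₁ ⊓ Λ₂) ≤ N - 1, with equality impossible
  have hup : finrank ℂ ↥(Λ₁ ⊓ Λ₂) ≤ N - 1 := hΛ₁ ▸ Submodule.finrank_mono inf_le_left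
  have hnotN1 : finrank ℂ ↥(Λ₁ ⊓ Λ₂) ≠ N - 1 := by
    intro h
    have e1 : Λ₁ ⊓ Λ₂ = Λ₁ :=
      Submodule.eq_of_le_of_finrank_eq inf_le_left (by rw [h, hΛ₁])
    have e2 : Λ₁ ⊓ Λ₂ = Λ₂ :=
      Submodule.eq_of_le_of_finrank_eq inf_le_right (by rw [h, hΛ₂])
    exact hne (e1 ▸ e2)
  have hinf : finrank ℂ ↥(Λ₁ ⊓ Λ₂) = N - 2 := by omega
  have hdim2 : finrank ℂ ↥(Λ₁ ⊔ Λ₂) + finrank ℂ ↥(Λ₁ ⊓ Λ₂)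
      = finrank ℂ Λ₁ + finrank ℂ Λ₂ := Submodule.finrank_sup_add_finrank_inf_eq _ _
  exact ⟨hinf, by omega⟩
end

section
/- Let X ⊂ ℙ³ be a surface of degree d ≥ 3 defined by X₃·g(X₀,X₁,X₃) + X₂·(X₃·L₃(X₀,X₁,X₂,X₃) + X₂·L₂(X₀,X₁,X₂) + L(X₀,X₁)) = 0, and let Λ be the line X₂ = X₃ = 0. Then the scheme Sing(X) ∩ Λ is defined inside Λ ≅ ℙ¹ by the equations g(X₀,X₁,0) = 0 and L(X₀,X₁) = 0. In particular, if Sing(X) ∩ Λ contains d−1 distinct points and deg g(X₀,X₁,0) ≤ d−1, deg L = d−1, then g(X₀,X₁,0) = α·L(X₀,X₁) for some α ∈ ℂ. -/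
open MvPolynomial

namespace Stmt9Aux

noncomputable def Φ : MvPolynomial (Fin 4) ℂ →ₐ[ℂ] Polynomial ℂ :=
  MvPolynomial.aeval ![Polynomial.X, 1, 0, 0]

lemma degree_univ (m : Fin 4 →₀ ℕ) : Finsupp.degree m = m 0 + m 1 + m 2 + m 3 := by
  rw [Finsupp.degree_apply]
  rw [Finset.sum_subset (Finset.subset_univ _) (by
    intro x _ hx
    simpa using hx)]
  rw [Fin.sum_univ_four]

lemma deg_univ {n : ℕ} {F : MvPolynomial (Fin 4) ℂ} (hF : F.IsHomogeneous n)
    {m : Fin 4 →₀ ℕ} (hm : m ∈ F.support) : m 0 + m 1 + m 2 + m 3 = n := by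
  have h1 : (Finsupp.weight 1) m = n := hF (mem_support_iff.mp hm)
  have h2 : Finsupp.degree m = (Finsupp.weight 1) m := by
    rw [Finsupp.degree_eq_weight_one]
    rfl
  rw [degree_univ] at h2
  rw [h2, h1]

lemma prod_pow {N : Type*} [CommMonoid N] (m : Fin 4 →₀ ℕ) (x : Fin 4 → N) :
    (m.prod fun i k => x i ^ k) = x 0 ^ m 0 * x 1 ^ m 1 * x 2 ^ m 2 * x 3 ^ m 3 := by
  rw [Finsupp.prod_fintype _ _ (fun i => pow_zero _), Fin.prod_univ_four]

lemma key_coeff {n : ℕ} {F : MvPolynomial (Fin 4) ℂ} (hF : F.IsHomogeneous n)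
    (hsupp : ∀ m ∈ F.support, m 2 = 0 ∧ m 3 = 0) (k : ℕ) :
    (Φ F).coeff k = F.coeff (Finsupp.single 0 k + Finsupp.single 1 (n - k)) := by
  set μ : Fin 4 →₀ ℕ := Finsupp.single 0 k + Finsupp.single 1 (n - k) with hμ
  have hμ0 : μ 0 = k := by simp [hμ, Finsupp.single_apply]
  have hμ1 : μ 1 = n - k := by simp [hμ, Finsupp.single_apply]
  have hμ2 : μ 2 = 0 := by simp [hμ, Finsupp.single_apply]
  have hμ3 : μ 3 = 0 := by simp [hμ, Finsupp.single_apply]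
  have hrepr : Φ F = ∑ m ∈ F.support, Polynomial.C (coeff m F) * Polynomial.X ^ (m 0) := by
    conv_lhs => rw [F.as_sum, map_sum]
    apply Finset.sum_congr rfl
    intro m hm
    obtain ⟨h2, h3⟩ := hsupp m hm
    rw [Φ, aeval_monomial, prod_pow, h2, h3]
    simp [Polynomial.C_eq_algebraMap]
  rw [hrepr, Polynomial.finset_sum_coeff]
  simp only [Polynomial.coeff_C_mul, Polynomial.coeff_X_pow]
  rw [Finset.sum_eq_single μ]
  · simp [hμ0]
  · intro m hm hne
    rcases eq_or_ne k (m 0) with hk | hk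
    · exfalso
      apply hne
      obtain ⟨h2, h3⟩ := hsupp m hm
      have hd := deg_univ hF hm
      ext i
      fin_cases i
      · show m 0 = μ 0; omega
      · show m 1 = μ 1; omega
      · show m 2 = μ 2; omega
      · show m 3 = μ 3; omega
    · simp [hk]
  · intro h
    simp [notMem_support_iff.mp h]

lemma eval_phi (F : MvPolynomial (Fin 4) ℂ) (t : ℂ) :
    (Φ F).eval t = eval ![t, 1, 0, 0] F := by
  have h : (Polynomial.aeval t).comp Φ = MvPolynomial.aeval ![t, 1, 0, 0] := by
    apply MvPolynomial.algHom_ext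
    intro i
    fin_cases i <;> simp [Φ]
  have h2 := congrArg (fun φ => φ F) h
  simp only [AlgHom.comp_apply] at h2
  rw [← Polynomial.coe_aeval_eq_eval, h2, ← MvPolynomial.coe_aeval_eq_eval]
  rfl

end Stmt9Aux

namespace Stmt9Aux

lemma natDeg_phi {n : ℕ} {F : MvPolynomial (Fin 4) ℂ} (hF : F.IsHomogeneous n)
    (hsupp : ∀ m ∈ F.support, m 2 = 0 ∧ m 3 = 0) : (Φ F).natDegree ≤ n := by
  rw [Polynomial.natDegree_le_iff_coeff_eq_zero]
  intro k hk
  rw [key_coeff hF hsupp]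
  apply hF.coeff_eq_zero
  have : Finsupp.degree (Finsupp.single (0 : Fin 4) k + Finsupp.single 1 (n - k))
      = k + (n - k) := by
    rw [degree_univ]
    simp [Finsupp.single_apply]
  omega

lemma inj_phi {n : ℕ} {F : MvPolynomial (Fin 4) ℂ} (hF : F.IsHomogeneous n)
    (hsupp : ∀ m ∈ F.support, m 2 = 0 ∧ m 3 = 0) (h : Φ F = 0) : F = 0 := by
  ext μ
  rw [coeff_zero]
  by_cases hm : μ ∈ F.support
  · obtain ⟨h2, h3⟩ := hsupp μ hm
    have hd := deg_univ hF hm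
    set ν : Fin 4 →₀ ℕ := Finsupp.single 0 (μ 0) + Finsupp.single 1 (n - μ 0) with hν
    have hν0 : ν 0 = μ 0 := by simp [hν, Finsupp.single_apply]
    have hν1 : ν 1 = n - μ 0 := by simp [hν, Finsupp.single_apply]
    have hν2 : ν 2 = 0 := by simp [hν, Finsupp.single_apply]
    have hν3 : ν 3 = 0 := by simp [hν, Finsupp.single_apply]
    have hμ : μ = ν := by
      ext i
      fin_cases i
      · show μ 0 = ν 0; omega
      · show μ 1 = ν 1; omega
      · show μ 2 = ν 2; omega
      · show μ 3 = ν 3; omega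
    rw [hμ, hν, ← key_coeff hF hsupp, h, Polynomial.coeff_zero]
  · exact notMem_support_iff.mp hm

lemma eval_smul_hom {n : ℕ} {F : MvPolynomial (Fin 4) ℂ} (hF : F.IsHomogeneous n)
    (c : ℂ) (x : Fin 4 → ℂ) : eval (fun i => c * x i) F = c ^ n * eval x F := by
  rw [eval_eq', eval_eq', Finset.mul_sum]
  refine Finset.sum_congr rfl fun m hm => ?_
  have hd := deg_univ hF hm
  rw [Fin.prod_univ_four, Fin.prod_univ_four]
  simp only [mul_pow]
  rw [← hd]
  ring

lemma coeff_subst3 (g : MvPolynomial (Fin 4) ℂ) (μ : Fin 4 →₀ ℕ) :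
    coeff μ (aeval (fun j : Fin 4 => if j = 3 then 0 else X j) g)
      = if μ 3 = 0 then coeff μ g else 0 := by
  conv_lhs => rw [g.as_sum, map_sum]
  have hterm : ∀ m : Fin 4 →₀ ℕ,
      aeval (fun j : Fin 4 => if j = 3 then 0 else X j) (monomial m (coeff m g))
        = if m 3 = 0 then monomial m (coeff m g) else 0 := by
    intro m
    rw [aeval_monomial, prod_pow]
    by_cases h3 : m 3 = 0
    · rw [if_pos h3, h3, pow_zero, mul_one, monomial_eq, prod_pow, h3, pow_zero, mul_one]
      simp [algebraMap_eq]
    · rw [if_neg h3]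
      simp [zero_pow h3]
  simp only [hterm]
  rw [MvPolynomial.coeff_sum]
  rw [Finset.sum_eq_single μ]
  · by_cases h3 : μ 3 = 0
    · rw [if_pos h3, if_pos h3, coeff_monomial, if_pos rfl]
    · rw [if_neg h3, if_neg h3, coeff_zero]
  · intro m hm hne
    by_cases h3 : m 3 = 0
    · rw [if_pos h3, coeff_monomial, if_neg hne]
    · rw [if_neg h3, coeff_zero]
  · intro h
    by_cases h3 : μ 3 = 0
    · rw [if_pos h3, coeff_monomial, if_pos rfl]
      exact notMem_support_iff.mp h
    · rw [if_neg h3, coeff_zero]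

lemma eval_subst3 (g : MvPolynomial (Fin 4) ℂ) (a b : ℂ) :
    eval ![a, b, 0, 0] (aeval (fun j : Fin 4 => if j = 3 then 0 else X j) g)
      = eval ![a, b, 0, 0] g := by
  have h : (MvPolynomial.aeval (R := ℂ) ![a, b, 0, 0]).comp
      (MvPolynomial.aeval (fun j : Fin 4 => if j = 3 then 0 else X j))
      = MvPolynomial.aeval ![a, b, 0, 0] := by
    apply MvPolynomial.algHom_ext
    intro i
    fin_cases i <;> simp
  have h2 := congrArg (fun φ => φ g) h
  simp only [AlgHom.comp_apply] at h2
  rw [← MvPolynomial.coe_aeval_eq_eval]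
  exact_mod_cast h2

lemma eval_one_zero {n : ℕ} {F : MvPolynomial (Fin 4) ℂ} (hF : F.IsHomogeneous n)
    (hsupp : ∀ m ∈ F.support, m 2 = 0 ∧ m 3 = 0) :
    eval ![(1:ℂ), 0, 0, 0] F = (Φ F).coeff n := by
  rw [key_coeff hF hsupp n, eval_eq']
  have hμ : (Finsupp.single (0:Fin 4) n + Finsupp.single 1 (n - n)) = Finsupp.single 0 n := by
    simp
  rw [hμ]
  rw [Finset.sum_eq_single (Finsupp.single (0:Fin 4) n)]
  · rw [Fin.prod_univ_four]
    simp [Finsupp.single_apply]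
  · intro m hm hne
    obtain ⟨h2, h3⟩ := hsupp m hm
    have hd := deg_univ hF hm
    have h1 : m 1 ≠ 0 := by
      intro h1
      apply hne
      ext i
      fin_cases i
      · show m 0 = Finsupp.single (0:Fin 4) n 0
        simp [Finsupp.single_apply]; omega
      · show m 1 = Finsupp.single (0:Fin 4) n 1
        simp [Finsupp.single_apply]; omega
      · show m 2 = Finsupp.single (0:Fin 4) n 2
        simp [Finsupp.single_apply]; omega
      · show m 3 = Finsupp.single (0:Fin 4) n 3
        simp [Finsupp.single_apply]; omega
    rw [Fin.prod_univ_four]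
    simp [zero_pow h1]
  · intro h
    rw [notMem_support_iff.mp h, zero_mul]

lemma univ_prop (m : ℕ) (p q : Polynomial ℂ) (hq : q ≠ 0)
    (hpd : p.natDegree ≤ m) (hqd : q.natDegree ≤ m) (T : Finset ℂ) (hT : m ≤ T.card)
    (hroots : ∀ t ∈ T, p.eval t = 0 ∧ q.eval t = 0) : ∃ α : ℂ, p = α • q := by
  have hsub : ∀ (r : Polynomial ℂ), r ≠ 0 → (∀ t ∈ T, r.eval t = 0) →
      T.card ≤ r.natDegree := by
    intro r hr hrt
    have hle : T.val ≤ r.roots := by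
      rw [Multiset.le_iff_subset T.nodup]
      intro x hx
      rw [Polynomial.mem_roots hr]
      exact hrt x hx
    calc T.card ≤ Multiset.card r.roots := Multiset.card_le_card hle
      _ ≤ r.natDegree := Polynomial.card_roots' r
  have hqdeg : q.natDegree = m :=
    le_antisymm hqd (le_trans hT (hsub q hq fun t ht => (hroots t ht).2))
  have hqm : q.coeff m ≠ 0 := by
    rw [← hqdeg]
    exact Polynomial.leadingCoeff_ne_zero.mpr hq
  have hr : q.coeff m • p - p.coeff m • q = 0 := by
    by_contra hr0
    have hrd : (q.coeff m • p - p.coeff m • q).natDegree ≤ m :=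
      le_trans (Polynomial.natDegree_sub_le _ _)
        (max_le (le_trans (Polynomial.natDegree_smul_le _ _) hpd)
          (le_trans (Polynomial.natDegree_smul_le _ _) hqd))
    have hrm : (q.coeff m • p - p.coeff m • q).coeff m = 0 := by
      simp only [Polynomial.coeff_sub, Polynomial.coeff_smul, smul_eq_mul]
      ring
    have hlt : (q.coeff m • p - p.coeff m • q).natDegree < m := by
      rcases lt_or_eq_of_le hrd with h | h
      · exact h
      · exfalso
        apply hr0
        rw [← Polynomial.leadingCoeff_eq_zero, Polynomial.leadingCoeff, h]
        exact hrm
    have := hsub _ hr0 (fun t ht => by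
      obtain ⟨hp0, hq0⟩ := hroots t ht
      simp [hp0, hq0])
    omega
  refine ⟨p.coeff m / q.coeff m, ?_⟩
  have heq : q.coeff m • p = p.coeff m • q := sub_eq_zero.mp hr
  calc p = (q.coeff m)⁻¹ • (q.coeff m • p) := by
        rw [smul_smul, inv_mul_cancel₀ hqm, one_smul]
    _ = (q.coeff m)⁻¹ • (p.coeff m • q) := by rw [heq]
    _ = (p.coeff m / q.coeff m) • q := by
        rw [smul_smul, div_eq_inv_mul, mul_comm]

end Stmt9Aux

open Stmt9Aux

/-- Let `X ⊂ ℙ³` be the surface of degree `d ≥ 3` defined by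
`X₃·g(X₀,X₁,X₃) + X₂·(X₃·L₃(X₀,X₁,X₂,X₃) + X₂·L₂(X₀,X₁,X₂) + L(X₀,X₁)) = 0` and `Λ` the line
`X₂ = X₃ = 0`. Then `Sing(X) ∩ Λ` is defined inside `Λ ≅ ℙ¹` by `g(X₀,X₁,0) = 0` and
`L(X₀,X₁) = 0`; and if `L ≠ 0` (`deg L = d-1`) and `Sing(X) ∩ Λ` contains `d-1` distinct
points, then `g(X₀,X₁,0) = α·L(X₀,X₁)` for some `α ∈ ℂ`. -/
theorem stmt_9 (d : ℕ) (hd : 3 ≤ d)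
    (g L₃ L₂ L : MvPolynomial (Fin 4) ℂ)
    (hg : g.IsHomogeneous (d - 1)) (hgsupp : ∀ m ∈ g.support, m 2 = 0)
    (hL₃ : L₃.IsHomogeneous (d - 2))
    (hL₂ : L₂.IsHomogeneous (d - 2)) (hL₂supp : ∀ m ∈ L₂.support, m 3 = 0)
    (hL : L.IsHomogeneous (d - 1)) (hLsupp : ∀ m ∈ L.support, m 2 = 0 ∧ m 3 = 0)
    (f : MvPolynomial (Fin 4) ℂ)
    (hfdef : f = X 3 * g + X 2 * (X 3 * L₃ + X 2 * L₂ + L)) :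
    (∀ a b : ℂ, (∀ i, eval ![a, b, 0, 0] (pderiv i f) = 0) ↔
        (eval ![a, b, 0, 0] g = 0 ∧ eval ![a, b, 0, 0] L = 0)) ∧
    (L ≠ 0 →
      ∀ P : Fin (d - 1) → ℂ × ℂ, (∀ i, P i ≠ 0) →
      (∀ i j, i ≠ j → (P i).1 * (P j).2 ≠ (P j).1 * (P i).2) →
      (∀ i, eval ![(P i).1, (P i).2, 0, 0] g = 0 ∧ eval ![(P i).1, (P i).2, 0, 0] L = 0) →
      ∃ α : ℂ, aeval (fun j : Fin 4 => if j = 3 then 0 else X j) g = α • L) := by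
  subst hfdef
  constructor
  · intro a b
    have key : ∀ i : Fin 4,
        eval ![a, b, 0, 0] (pderiv i (X 3 * g + X 2 * (X 3 * L₃ + X 2 * L₂ + L)))
          = (if i = 3 then 1 else 0) * eval ![a, b, 0, 0] g
            + (if i = 2 then 1 else 0) * eval ![a, b, 0, 0] L := by
      intro i
      fin_cases i <;> simp [pderiv_mul, pderiv_X, Pi.single_apply]
    constructor
    · intro h
      constructor
      · have h3 := h 3
        rw [key 3] at h3
        simpa using h3
      · have h2 := h 2
        rw [key 2] at h2
        simpa using h2
    · rintro ⟨h1, h2⟩ i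
      rw [key i, h1, h2]
      ring
  · intro hLne P hPne hdist hvan
    set G : MvPolynomial (Fin 4) ℂ := aeval (fun j : Fin 4 => if j = 3 then 0 else X j) g with hG
    have hGsupp : ∀ m ∈ G.support, m 2 = 0 ∧ m 3 = 0 := by
      intro m hm
      have hc := mem_support_iff.mp hm
      rw [hG, coeff_subst3] at hc
      by_cases h3 : m 3 = 0
      · rw [if_pos h3] at hc
        exact ⟨hgsupp m (mem_support_iff.mpr hc), h3⟩
      · rw [if_neg h3] at hc
        exact absurd rfl hc
    have hGhom : G.IsHomogeneous (d - 1) := by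
      intro m hm
      rw [hG, coeff_subst3] at hm
      by_cases h3 : m 3 = 0
      · rw [if_pos h3] at hm
        exact hg hm
      · rw [if_neg h3] at hm
        exact absurd rfl hm
    have hGeval : ∀ a b : ℂ, eval ![a, b, 0, 0] G = eval ![a, b, 0, 0] g :=
      fun a b => eval_subst3 g a b
    have hq0 : Φ L ≠ 0 := fun h => hLne (inj_phi hL hLsupp h)
    have hpd : (Φ G).natDegree ≤ d - 1 := natDeg_phi hGhom hGsupp
    have hqd : (Φ L).natDegree ≤ d - 1 := natDeg_phi hL hLsupp
    have hroot : ∀ (F : MvPolynomial (Fin 4) ℂ), F.IsHomogeneous (d - 1) →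
        ∀ i : Fin (d - 1), (P i).2 ≠ 0 → eval ![(P i).1, (P i).2, 0, 0] F = 0 →
        (Φ F).eval ((P i).1 / (P i).2) = 0 := by
      intro F hF i hb hv
      have hx : ![(P i).1, (P i).2, 0, 0]
          = fun j => (P i).2 * (![(P i).1 / (P i).2, 1, 0, 0] j) := by
        funext j
        fin_cases j <;> simp
        field_simp
      have hs := eval_smul_hom hF ((P i).2) ![(P i).1 / (P i).2, 1, 0, 0]
      rw [← hx, hv] at hs
      rw [eval_phi]
      exact ((mul_eq_zero.mp hs.symm).resolve_left (pow_ne_zero _ hb))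
    classical
    set S : Finset (Fin (d - 1)) := Finset.univ.filter (fun i => (P i).2 ≠ 0) with hS
    set T : Finset ℂ := S.image (fun i => (P i).1 / (P i).2) with hT
    have hinj : Set.InjOn (fun i => (P i).1 / (P i).2) S := by
      intro i hi j hj hij
      by_contra hne
      apply hdist i j hne
      have hbi : (P i).2 ≠ 0 := by
        have := Finset.mem_filter.mp (Finset.mem_coe.mp hi)
        exact this.2
      have hbj : (P j).2 ≠ 0 := by
        have := Finset.mem_filter.mp (Finset.mem_coe.mp hj)
        exact this.2
      exact (div_eq_div_iff hbi hbj).mp hij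
    have hTcard : T.card = S.card := Finset.card_image_of_injOn hinj
    have hTroots : ∀ t ∈ T, (Φ G).eval t = 0 ∧ (Φ L).eval t = 0 := by
      intro t ht
      obtain ⟨i, hi, rfl⟩ := Finset.mem_image.mp ht
      have hb := (Finset.mem_filter.mp hi).2
      exact ⟨hroot G hGhom i hb (by rw [hGeval]; exact (hvan i).1),
        hroot L hL i hb ((hvan i).2)⟩
    have main : ∃ α : ℂ, Φ G = α • Φ L := by
      by_cases hSu : S = Finset.univ
      · refine univ_prop (d - 1) (Φ G) (Φ L) hq0 hpd hqd T ?_ hTroots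
        rw [hTcard, hSu]
        simp
      · obtain ⟨i₀, hi₀⟩ : ∃ i₀, i₀ ∉ S := by
          by_contra h
          push_neg at h
          exact hSu (Finset.eq_univ_iff_forall.mpr h)
        have hb₀ : (P i₀).2 = 0 := by
          by_contra h
          exact hi₀ (Finset.mem_filter.mpr ⟨Finset.mem_univ _, h⟩)
        have ha₀ : (P i₀).1 ≠ 0 := by
          intro h
          exact hPne i₀ (Prod.ext_iff.mpr ⟨h, hb₀⟩)
        have hSeq : S = Finset.univ.erase i₀ := by
          ext j
          rw [hS, Finset.mem_filter, Finset.mem_erase]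
          constructor
          · rintro ⟨-, hbj⟩
            refine ⟨fun hji => hbj (hji ▸ hb₀), Finset.mem_univ _⟩
          · rintro ⟨hji, -⟩
            refine ⟨Finset.mem_univ _, fun hbj => ?_⟩
            apply hdist i₀ j (fun h => hji h.symm)
            rw [hb₀, hbj, mul_zero, mul_zero]
        have hScard : S.card = d - 1 - 1 := by
          rw [hSeq, Finset.card_erase_of_mem (Finset.mem_univ _)]
          simp
        have hcoefftop : ∀ (F : MvPolynomial (Fin 4) ℂ), F.IsHomogeneous (d - 1) →
            (∀ m ∈ F.support, m 2 = 0 ∧ m 3 = 0) →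
            eval ![(P i₀).1, (0:ℂ), 0, 0] F = 0 → (Φ F).coeff (d - 1) = 0 := by
          intro F hF hs hv
          have hx : ![(P i₀).1, (0:ℂ), 0, 0] = fun j => (P i₀).1 * (![1, 0, 0, 0] j) := by
            funext j
            fin_cases j <;> simp
          have hsm := eval_smul_hom hF ((P i₀).1) ![1, 0, 0, 0]
          rw [← hx, hv, eval_one_zero hF hs] at hsm
          exact ((mul_eq_zero.mp hsm.symm).resolve_left (pow_ne_zero _ ha₀))
        have hptop : (Φ G).coeff (d - 1) = 0 := by
          apply hcoefftop G hGhom hGsupp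
          rw [hGeval]
          have := (hvan i₀).1
          rwa [hb₀] at this
        have hqtop : (Φ L).coeff (d - 1) = 0 := by
          apply hcoefftop L hL hLsupp
          have := (hvan i₀).2
          rwa [hb₀] at this
        have hdeg' : ∀ r : Polynomial ℂ, r.natDegree ≤ d - 1 → r.coeff (d - 1) = 0 →
            r.natDegree ≤ d - 1 - 1 := by
          intro r hr hc
          rw [Polynomial.natDegree_le_iff_coeff_eq_zero]
          intro k hk
          by_cases hkd : k = d - 1
          · rw [hkd]
            exact hc
          · exact Polynomial.coeff_eq_zero_of_natDegree_lt (lt_of_le_of_lt hr (by omega))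
        refine univ_prop (d - 1 - 1) (Φ G) (Φ L) hq0 (hdeg' _ hpd hptop)
          (hdeg' _ hqd hqtop) T ?_ hTroots
        rw [hTcard, hScard]
    obtain ⟨α, hα⟩ := main
    refine ⟨α, ?_⟩
    have hFhom : (G - α • L).IsHomogeneous (d - 1) := by
      apply hGhom.sub
      rw [smul_eq_C_mul]
      exact hL.C_mul α
    have hFsupp : ∀ m ∈ (G - α • L).support, m 2 = 0 ∧ m 3 = 0 := by
      intro m hm
      rcases Finset.mem_union.mp (support_sub _ G (α • L) hm) with h | h
      · exact hGsupp m h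
      · exact hLsupp m (support_smul h)
    have hΦF : Φ (G - α • L) = 0 := by
      rw [map_sub, map_smul, hα, sub_self]
    have hz := inj_phi hFhom hFsupp hΦF
    exact sub_eq_zero.mp hz
end

section
/- Let P be a point of an irreducible hypersurface X ⊂ ℙ^N of degree d ≥ 3 such that there is a hyperplane Π with Π ∩ X a cone with vertex P (a star point, possibly singular). Then P is a proper star point: there exists a 1-parameter family X(t) of degree-d hypersurfaces with X(0) = X such that for generic t ≠ 0, P is a smooth point of X(t) and a star point of X(t). Concretely, if in coordinates P = (1:0:⋯:0), Π = {X₁ = 0}, and X is defined by X₁·h(X₀,...,X_N) + g(X₂,...,X_N) = 0, then for general homogeneous forms H of degree d−1 and G of degree d (G independent of X₀, X₁), the hypersurface X(t): X₁·(h + tH) + (g + tG) = 0 has P as a smooth star point for generic t ≠ 0. -/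
open MvPolynomial

/-- The point `e₀ = (1:0:⋯:0)` is a (possibly singular) star point of the hypersurface
`{F = 0}`: there is a hyperplane `{ℓ = 0}` through `e₀` whose section of the hypersurface is a
cone with vertex `e₀`, i.e. for every point `Q` of the section, the line `⟨e₀,Q⟩` lies in the
hypersurface. -/
def IsStarPointAtE0 (N : ℕ) (F : MvPolynomial (Fin (N + 1)) ℂ) : Prop :=
  ∃ ℓ : (Fin (N + 1) → ℂ) →ₗ[ℂ] ℂ, ℓ ≠ 0 ∧
    ℓ (fun i => if i = 0 then 1 else 0) = 0 ∧
    ∀ Q : Fin (N + 1) → ℂ, eval Q F = 0 → ℓ Q = 0 →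
      ∀ s t : ℂ, eval (s • (fun i => if i = 0 then 1 else 0 : Fin (N + 1) → ℂ) + t • Q) F = 0

lemma degsum {N d : ℕ} (g : MvPolynomial (Fin (N+1)) ℂ) (hg : g.IsHomogeneous d)
    (m : Fin (N+1) →₀ ℕ) (hm : m ∈ g.support) : ∑ i, m i = d := by
  have := hg (mem_support_iff.mp hm)
  rw [← this]
  simp [Finsupp.weight, Finsupp.linearCombination, Finsupp.sum]
  exact (Finset.sum_subset (Finset.subset_univ _) (by simp +contextual)).symm

lemma eval_scale {N d : ℕ} (g : MvPolynomial (Fin (N+1)) ℂ)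
    (hg : g.IsHomogeneous d) (hsupp : ∀ m ∈ g.support, m 0 = 0 ∧ m 1 = 0)
    (p Q : Fin (N+1) → ℂ) (t : ℂ) (hp : ∀ i, i ≠ 0 → i ≠ 1 → p i = t * Q i) :
    eval p g = t ^ d * eval Q g := by
  rw [eval_eq, eval_eq, Finset.mul_sum]
  refine Finset.sum_congr rfl fun m hm => ?_
  obtain ⟨h0, h1⟩ := hsupp m hm
  have key : ∏ i, p i ^ m i = ∏ i, (t ^ m i * Q i ^ m i) := by
    refine Finset.prod_congr rfl fun i _ => ?_
    by_cases hi0 : i = 0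
    · subst hi0; rw [h0]; simp
    by_cases hi1 : i = 1
    · subst hi1; rw [h1]; simp
    · rw [hp i hi0 hi1, mul_pow]
  have hsub : ∀ f : Fin (N+1) → ℂ, ∏ i ∈ m.support, f i ^ m i = ∏ i, f i ^ m i :=
    fun f => Finset.prod_subset (Finset.subset_univ _)
      (fun i _ hi => by rw [Finsupp.notMem_support_iff.mp hi, pow_zero])
  rw [hsub p, hsub Q, key, Finset.prod_mul_distrib, Finset.prod_pow_eq_pow_sum,
    degsum g hg m hm]
  ring

/-- Every star point is proper.  Let `P = (1:0:⋯:0)` be a (possibly singular) star point of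
`X = {X₁·h + g = 0}` (with `g` independent of `X₀, X₁`, so that the section by `{X₁ = 0}` is a
cone with vertex `P`).  Then there are forms `H` of degree `d-1` and `G` of degree `d`
(independent of `X₀, X₁`) such that for all but finitely many `t ≠ 0`, the point `P` is a
smooth point and a star point of `X(t) = {X₁·(h + tH) + (g + tG) = 0}`. -/
theorem stmt_11 (N d : ℕ) (hN : 2 ≤ N) (hd : 3 ≤ d)
    (h g : MvPolynomial (Fin (N + 1)) ℂ)
    (hh : h.IsHomogeneous (d - 1)) (hg : g.IsHomogeneous d)
    (hgsupp : ∀ m ∈ g.support, m 0 = 0 ∧ m 1 = 0) :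
    ∃ H G : MvPolynomial (Fin (N + 1)) ℂ,
      H.IsHomogeneous (d - 1) ∧ G.IsHomogeneous d ∧ (∀ m ∈ G.support, m 0 = 0 ∧ m 1 = 0) ∧
      ∃ S : Finset ℂ, ∀ t : ℂ, t ∉ S → t ≠ 0 →
        (eval (fun i => if i = 0 then 1 else 0 : Fin (N + 1) → ℂ)
            (X 1 * (h + C t * H) + (g + C t * G)) = 0) ∧
        (∃ i, eval (fun i => if i = 0 then 1 else 0 : Fin (N + 1) → ℂ)
            (pderiv i (X 1 * (h + C t * H) + (g + C t * G))) ≠ 0) ∧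
        IsStarPointAtE0 N (X 1 * (h + C t * H) + (g + C t * G)) := by
  set e0 : Fin (N + 1) → ℂ := (fun i => if i = 0 then 1 else 0) with he0
  have h10 : (1 : Fin (N + 1)) ≠ 0 := by
    intro hcon
    have := congrArg Fin.val hcon
    simp [Fin.val_one'] at this
    omega
  have he01 : e0 1 = 0 := by simp [he0, h10]
  refine ⟨X 0 ^ (d - 1), 0, ?_, ?_, by simp, {-(eval e0 h)}, fun t hts ht0 => ?_⟩
  · have := (isHomogeneous_X ℂ (0 : Fin (N+1))).pow (d - 1)
    simpa using this
  · exact isHomogeneous_zero _ _ _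
  have hge0 : eval e0 g = 0 := by
    rw [eval_scale g hg hgsupp e0 e0 0 (fun i hi0 _ => by simp [he0, hi0])]
    rw [zero_pow (by omega), zero_mul]
  have hgder : pderiv (1 : Fin (N+1)) g = 0 := by
    apply pderiv_eq_zero_of_notMem_vars
    intro hmem
    obtain ⟨m, hm, h1m⟩ := (mem_vars _).mp hmem
    exact (Finsupp.mem_support_iff.mp h1m) (hgsupp m hm).2
  refine ⟨?_, ⟨1, ?_⟩, ?_⟩
  · simp [he01, hge0]
  · have : eval e0 (pderiv (1 : Fin (N+1))
        (X 1 * (h + C t * X 0 ^ (d-1)) + (g + C t * 0))) = eval e0 h + t := by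
      simp [pderiv_mul, hgder, he01, he0, pow_eq_zero_iff]
      intro hN0
      omega
    rw [this]
    intro hcon
    apply hts
    simp only [Finset.mem_singleton]
    exact eq_neg_of_add_eq_zero_right hcon
  · refine ⟨LinearMap.proj 1, ?_, by simp [h10], fun Q hQ hQ1 s u => ?_⟩
    · intro hzero
      have := congrFun (congrArg DFunLike.coe hzero) (Pi.single 1 1)
      simp at this
    · simp only [LinearMap.proj_apply] at hQ1
      have hgQ : eval Q g = 0 := by
        simpa [hQ1] using hQ
      have hp1 : (s • e0 + u • Q) 1 = 0 := by
        simp [he01, hQ1]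
      have hgp : eval (s • e0 + u • Q) g = 0 := by
        rw [eval_scale g hg hgsupp _ Q u (fun i hi0 hi1 => by
          simp [he0, hi0, Pi.add_apply])]
        rw [hgQ, mul_zero]
      have hN0 : N ≠ 0 := by omega
      simp only [he0] at hgp
      simp [hp1, hgp, hQ1, hN0]
end

section
/- Let Γ ⊂ V ≅ ℙ² be an irreducible plane curve of degree d ≥ 3, L ⊂ ℙ^N an (N−3)-dimensional linear subspace with L ∩ V = ∅, and X the cone over Γ with vertex L. If Q is a total inflection point of Γ with tangent line T, then every point P ∈ ⟨Q, L⟩ \ L is a smooth point of X, and the tangent hyperplane T_P(X) equals ⟨T, L⟩; moreover T_P(X) ∩ X = d·⟨Q, L⟩ as divisors, so P is a star point of X. -/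
open MvPolynomial Module

/-- Restriction of a multivariate polynomial to the line `t ↦ P + t • w`. -/
noncomputable def linePoly {n : ℕ} (P w : Fin n → ℂ) (f : MvPolynomial (Fin n) ℂ) :
    Polynomial ℂ :=
  MvPolynomial.eval₂ Polynomial.C
    (fun i => Polynomial.C (P i) + Polynomial.X * Polynomial.C (w i)) f

lemma linePoly_eval {n : ℕ} (P w : Fin n → ℂ) (f : MvPolynomial (Fin n) ℂ) (t : ℂ) :
    (linePoly P w f).eval t = MvPolynomial.eval (P + t • w) f := by
  unfold linePoly
  rw [show (Polynomial.eval t (MvPolynomial.eval₂ Polynomial.C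
      (fun i => Polynomial.C (P i) + Polynomial.X * Polynomial.C (w i)) f) : ℂ)
      = (Polynomial.evalRingHom t) (MvPolynomial.eval₂ Polynomial.C
      (fun i => Polynomial.C (P i) + Polynomial.X * Polynomial.C (w i)) f) from rfl,
    MvPolynomial.eval₂_comp_left]
  have h1 : (Polynomial.evalRingHom t).comp Polynomial.C = RingHom.id ℂ :=
    RingHom.ext fun a => by simp
  have h2 : ((Polynomial.evalRingHom t) ∘ fun i =>
      Polynomial.C (P i) + Polynomial.X * Polynomial.C (w i)) = (P + t • w) := by
    funext i
    simp only [Function.comp_apply, Polynomial.coe_evalRingHom, Polynomial.eval_add,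
      Polynomial.eval_C, Polynomial.eval_mul, Polynomial.eval_X, Pi.add_apply,
      Pi.smul_apply, smul_eq_mul]
    try ring
  rw [h1, h2]
  rfl

lemma linePoly_add {n : ℕ} (P w : Fin n → ℂ) (f g : MvPolynomial (Fin n) ℂ) :
    linePoly P w (f + g) = linePoly P w f + linePoly P w g :=
  MvPolynomial.eval₂_add _ _

lemma linePoly_coeff_zero {n : ℕ} (P w : Fin n → ℂ) (f : MvPolynomial (Fin n) ℂ) :
    (linePoly P w f).coeff 0 = MvPolynomial.eval P f := by
  rw [Polynomial.coeff_zero_eq_eval_zero, linePoly_eval]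
  simp

lemma linePoly_coeff_one {n : ℕ} (P w : Fin n → ℂ) (f : MvPolynomial (Fin n) ℂ) :
    (linePoly P w f).coeff 1 = ∑ i, MvPolynomial.eval P (pderiv i f) * w i := by
  induction f using MvPolynomial.induction_on with
  | C a => simp [linePoly, MvPolynomial.eval₂_C]
  | add p q hp hq =>
      rw [linePoly_add, Polynomial.coeff_add, hp, hq, ← Finset.sum_add_distrib]
      exact Finset.sum_congr rfl fun i _ => by rw [map_add, map_add]; ring
  | mul_X p i hp =>
      have hexp : linePoly P w (p * X i)
          = linePoly P w p * Polynomial.C (P i)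
            + linePoly P w p * Polynomial.X * Polynomial.C (w i) := by
        unfold linePoly
        rw [MvPolynomial.eval₂_mul, MvPolynomial.eval₂_X]
        ring
      rw [hexp, Polynomial.coeff_add, Polynomial.coeff_mul_C, Polynomial.coeff_mul_C,
        Polynomial.coeff_mul_X, hp, linePoly_coeff_zero]
      have : ∀ j, MvPolynomial.eval P (pderiv j (p * X i)) * w j
          = (MvPolynomial.eval P (pderiv j p) * w j) * P i
            + (if i = j then MvPolynomial.eval P p * w j else 0) := by
        intro j
        rw [pderiv_mul, pderiv_X]
        by_cases h : i = j <;> simp [h, Pi.single_apply] <;> ring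
      rw [Finset.sum_congr rfl fun j _ => this j, Finset.sum_add_distrib,
        Finset.sum_ite_eq (Finset.univ) i (fun j => MvPolynomial.eval P p * w j)]
      simp only [Finset.mem_univ, if_true, ← Finset.sum_mul]
      try ring
      try rfl

lemma eval_smul_isHomog {n d : ℕ} {f : MvPolynomial (Fin n) ℂ} (hf : f.IsHomogeneous d)
    (r : ℂ) (x : Fin n → ℂ) :
    MvPolynomial.eval (r • x) f = r ^ d * MvPolynomial.eval x f := by
  rw [MvPolynomial.eval_eq', MvPolynomial.eval_eq', Finset.mul_sum]
  refine Finset.sum_congr rfl fun m hm => ?_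
  have hdeg : ∑ i, m i = d := by
    have h1 := hf (MvPolynomial.mem_support_iff.mp hm)
    rw [← h1, Finsupp.weight_apply, Finsupp.sum]
    simp only [Pi.one_apply, smul_eq_mul, mul_one]
    exact (Finset.sum_subset (Finset.subset_univ _)
      (fun i _ hi => by simpa using Finsupp.notMem_support_iff.mp hi)).symm
  calc f.coeff m * ∏ i, (r • x) i ^ m i
      = f.coeff m * ∏ i, (r ^ m i * x i ^ m i) := by
        congr 1; exact Finset.prod_congr rfl fun i _ => by
          simp [Pi.smul_apply, smul_eq_mul, mul_pow]
    _ = r ^ d * (f.coeff m * ∏ i, x i ^ m i) := by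
        rw [Finset.prod_mul_distrib, Finset.prod_pow_eq_pow_sum, hdeg]; ring

/-- Let `X = {f = 0} ⊂ ℙ^N` be the irreducible cone of degree `d ≥ 3` with vertex the
`(N-3)`-dimensional linear space `L` over an irreducible plane curve `Γ = X ∩ V`, where `V`
is a plane with `L ∩ V = ∅`.  If `Q` is a total inflection point of `Γ` with tangent
direction `u` (so `f` restricted to the line `⟨Q,u⟩` is `c·t^d`, `c ≠ 0`), then every point
`P ∈ ⟨Q,L⟩ \ L` lies on `X`, is a smooth point of `X`, has tangent hyperplane
`T_P(X) = ⟨T,L⟩ = span{Q,u} ⊔ L`, and `T_P(X) ∩ X = d·⟨Q,L⟩` as divisors; in particular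
`P` is a star point of `X`. -/
theorem stmt_15 (N d : ℕ) (hN : 3 ≤ N) (hd : 3 ≤ d)
    (f : MvPolynomial (Fin (N + 1)) ℂ) (hf : f.IsHomogeneous d) (hirr : Irreducible f)
    (V L : Submodule ℂ (Fin (N + 1) → ℂ))
    (hV : finrank ℂ V = 3) (hL : finrank ℂ L = N - 2) (hVL : V ⊓ L = ⊥)
    (hcone : ∀ v : Fin (N + 1) → ℂ, eval v f = 0 →
      ∀ w ∈ L, ∀ s t : ℂ, eval (s • v + t • w) f = 0)
    (Q u : Fin (N + 1) → ℂ) (hQV : Q ∈ V) (huV : u ∈ V)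
    (hQu : LinearIndependent ℂ ![Q, u])
    (hQsm : ∃ w ∈ V, ∑ i, eval Q (pderiv i f) * w i ≠ 0)
    (c : ℂ) (hc : c ≠ 0) (hti : ∀ t : ℂ, eval (Q + t • u) f = c * t ^ d) :
    ∀ P : Fin (N + 1) → ℂ, P ∈ Submodule.span ℂ {Q} ⊔ L → P ∉ L →
      eval P f = 0 ∧
      (∃ i, eval P (pderiv i f) ≠ 0) ∧
      (∀ w : Fin (N + 1) → ℂ,
        (∑ i, eval P (pderiv i f) * w i = 0) ↔ w ∈ Submodule.span ℂ {Q, u} ⊔ L) ∧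
      (∃ (ℓ : (Fin (N + 1) → ℂ) →ₗ[ℂ] ℂ) (c' : ℂ), c' ≠ 0 ∧
        Submodule.span ℂ {Q} ⊔ L = (Submodule.span ℂ {Q, u} ⊔ L) ⊓ LinearMap.ker ℓ ∧
        ∀ w ∈ Submodule.span ℂ {Q, u} ⊔ L, eval w f = c' * (ℓ w) ^ d) := by
  intro P hP hPL
  have hd0 : d ≠ 0 := by omega
  have hd1 : d ≠ 1 := by omega
  have hQ0 : MvPolynomial.eval Q f = 0 := by
    have h := hti 0
    simpa [zero_pow hd0] using h
  -- translation invariance along L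
  have hT : ∀ (x : Fin (N+1) → ℂ), ∀ w0 ∈ L, ∀ t : ℂ,
      MvPolynomial.eval (x + t • w0) f = MvPolynomial.eval x f := by
    intro x w0 hw0 t
    set g := linePoly x w0 f with hg
    have hgval : ∀ s : ℂ, g.eval s = MvPolynomial.eval (x + s • w0) f :=
      fun s => linePoly_eval x w0 f s
    by_cases hdeg : g.degree = 0
    · have hC := Polynomial.eq_C_of_degree_le_zero (le_of_eq hdeg)
      have h1 : MvPolynomial.eval (x + t • w0) f = g.coeff 0 := by
        rw [← hgval t]
        conv_lhs => rw [hC]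
        rw [Polynomial.eval_C]
      have h0 : MvPolynomial.eval x f = g.coeff 0 := by
        have h := hgval 0
        conv_lhs at h => rw [hC]
        rw [Polynomial.eval_C] at h
        simpa using h.symm
      rw [h1, h0]
    · obtain ⟨t₀, ht₀⟩ := Complex.isAlgClosed.exists_root g hdeg
      have hroot : MvPolynomial.eval (x + t₀ • w0) f = 0 := by
        rw [← hgval t₀]; exact ht₀
      have hall : ∀ s : ℂ, MvPolynomial.eval (x + s • w0) f = 0 := by
        intro s
        have h := hcone (x + t₀ • w0) hroot w0 hw0 1 (s - t₀)
        have heq : (1:ℂ) • (x + t₀ • w0) + (s - t₀) • w0 = x + s • w0 := by module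
        rwa [heq] at h
      have h1 := hall t
      have h0 := hall 0
      simp only [zero_smul, add_zero] at h0
      rw [h1, h0]
  -- values on the plane spanned by Q and u
  have hline : ∀ s t : ℂ, MvPolynomial.eval (s • Q + t • u) f = c * t ^ d := by
    intro s t
    set g := linePoly (t • u) Q f with hg
    have hgval : ∀ s : ℂ, g.eval s = MvPolynomial.eval (t • u + s • Q) f :=
      fun s => linePoly_eval (t • u) Q f s
    have hne : ∀ s : ℂ, s ≠ 0 → g.eval s = c * t ^ d := by
      intro s hs
      have heq : t • u + s • Q = s • (Q + (s⁻¹ * t) • u) := by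
        rw [smul_add, smul_smul, mul_inv_cancel_left₀ hs]
        module
      rw [hgval s, heq, eval_smul_isHomog hf, hti]
      rw [mul_pow, inv_pow]
      field_simp
    have hgc : g = Polynomial.C (c * t ^ d) := by
      have hz : g - Polynomial.C (c * t ^ d) = 0 := by
        apply Polynomial.eq_zero_of_infinite_isRoot
        apply Set.Infinite.mono (s := ({0}ᶜ : Set ℂ))
        · intro s hs
          have hs0 : s ≠ 0 := by simpa using hs
          simp only [Set.mem_setOf_eq, Polynomial.IsRoot, Polynomial.eval_sub,
            Polynomial.eval_C, hne s hs0, sub_self]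
        · exact (Set.finite_singleton 0).infinite_compl
      exact sub_eq_zero.mp hz
    have : MvPolynomial.eval (t • u + s • Q) f = c * t ^ d := by
      rw [← hgval s, hgc, Polynomial.eval_C]
    rw [show s • Q + t • u = t • u + s • Q from add_comm _ _]
    exact this
  -- decompose P
  obtain ⟨y, hy, w0, hw0, hPeq⟩ := Submodule.mem_sup.mp hP
  obtain ⟨a, rfl⟩ := Submodule.mem_span_singleton.mp hy
  have ha : a ≠ 0 := by
    rintro rfl
    rw [zero_smul, zero_add] at hPeq
    exact hPL (hPeq ▸ hw0)
  have hPeq : P = a • Q + w0 := hPeq.symm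
  -- P lies on X
  have hPval : MvPolynomial.eval P f = 0 := by
    rw [hPeq, show a • Q + w0 = a • Q + (1:ℂ) • w0 by rw [one_smul],
      hT _ w0 hw0 1, eval_smul_isHomog hf, hQ0, mul_zero]
  -- the gradient at P is a^(d-1) times the gradient at Q
  have hlineP : ∀ w : Fin (N+1) → ℂ,
      linePoly P w f = Polynomial.C (a ^ d) * linePoly Q (a⁻¹ • w) f := by
    intro w
    apply Polynomial.funext
    intro t
    rw [Polynomial.eval_mul, Polynomial.eval_C, linePoly_eval, linePoly_eval]
    have h1 : P + t • w = (a • Q + t • w) + (1:ℂ) • w0 := by rw [hPeq]; module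
    rw [h1, hT _ w0 hw0 1]
    have h2 : a • Q + t • w = a • (Q + t • (a⁻¹ • w)) := by
      match_scalars <;> field_simp
    rw [h2, eval_smul_isHomog hf]
  have hgradP : ∀ w : Fin (N+1) → ℂ,
      ∑ i, MvPolynomial.eval P (pderiv i f) * w i
        = a ^ (d-1) * ∑ i, MvPolynomial.eval Q (pderiv i f) * w i := by
    intro w
    have h := congrArg (fun p => Polynomial.coeff p 1) (hlineP w)
    beta_reduce at h
    rw [linePoly_coeff_one, Polynomial.coeff_C_mul, linePoly_coeff_one] at h
    rw [h]
    have h3 : ∑ i, MvPolynomial.eval Q (pderiv i f) * (a⁻¹ • w) i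
        = a⁻¹ * ∑ i, MvPolynomial.eval Q (pderiv i f) * w i := by
      rw [Finset.mul_sum]
      exact Finset.sum_congr rfl fun i _ => by
        simp only [Pi.smul_apply, smul_eq_mul]; ring
    rw [h3, ← mul_assoc]
    congr 1
    obtain ⟨k, hk⟩ : ∃ k, d = k + 1 := ⟨d - 1, by omega⟩
    subst hk
    rw [Nat.add_sub_cancel, pow_succ, mul_assoc, mul_inv_cancel₀ ha, mul_one]
  have hand1 : ∃ i, MvPolynomial.eval P (pderiv i f) ≠ 0 := by
    obtain ⟨w1, _, hw1⟩ := hQsm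
    by_contra hno
    push_neg at hno
    have hz : ∑ i, MvPolynomial.eval P (pderiv i f) * w1 i = 0 :=
      Finset.sum_eq_zero fun i _ => by rw [hno i, zero_mul]
    rw [hgradP w1] at hz
    exact hw1 ((mul_eq_zero.mp hz).resolve_left (pow_ne_zero _ ha))
  -- the gradient at P as a linear functional
  set G : (Fin (N+1) → ℂ) →ₗ[ℂ] ℂ :=
    ∑ i, MvPolynomial.eval P (pderiv i f) • (LinearMap.proj i) with hGdef
  have hG : ∀ w, G w = ∑ i, MvPolynomial.eval P (pderiv i f) * w i := by
    intro w
    simp [hGdef, LinearMap.sum_apply, LinearMap.smul_apply, LinearMap.proj_apply,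
      smul_eq_mul]
  -- G vanishes on Q, u, and L
  have hGQ : G Q = 0 := by
    have hzero : linePoly P Q f = 0 := by
      apply Polynomial.funext
      intro t
      rw [linePoly_eval]
      have h1 : P + t • Q = (a + t) • Q + (1:ℂ) • w0 := by rw [hPeq]; module
      rw [h1, hT _ w0 hw0 1, eval_smul_isHomog hf, hQ0, mul_zero,
        Polynomial.eval_zero]
    rw [hG, ← linePoly_coeff_one, hzero, Polynomial.coeff_zero]
  have hGu : G u = 0 := by
    have hzero : linePoly P u f = Polynomial.C c * Polynomial.X ^ d := by
      apply Polynomial.funext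
      intro t
      rw [linePoly_eval]
      have h1 : P + t • u = (a • Q + t • u) + (1:ℂ) • w0 := by rw [hPeq]; module
      rw [h1, hT _ w0 hw0 1, hline a t]
      simp
    rw [hG, ← linePoly_coeff_one, hzero, Polynomial.coeff_C_mul,
      Polynomial.coeff_X_pow]
    simp [Ne.symm hd1]
  have hGL : ∀ z ∈ L, G z = 0 := by
    intro z hz
    have hzero : linePoly P z f = Polynomial.C (MvPolynomial.eval P f) := by
      apply Polynomial.funext
      intro t
      rw [linePoly_eval, hT _ z hz t, Polynomial.eval_C]
    rw [hG, ← linePoly_coeff_one, hzero]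
    exact Polynomial.coeff_C_ne_zero one_ne_zero
  have hvan : ∀ w ∈ Submodule.span ℂ {Q, u} ⊔ L, G w = 0 := by
    intro w hw
    obtain ⟨y, hy, z, hz, rfl⟩ := Submodule.mem_sup.mp hw
    obtain ⟨s, t, rfl⟩ := Submodule.mem_span_pair.mp hy
    rw [map_add, map_add, map_smul, map_smul, hGQ, hGu, hGL z hz]
    simp
  -- dimension count
  have hspanV : Submodule.span ℂ {Q, u} ≤ V := by
    rw [Submodule.span_le]
    rintro x hx
    rcases hx with rfl | hx
    · exact hQV
    · rw [Set.mem_singleton_iff] at hx; subst hx; exact huV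
  have hinf : Submodule.span ℂ {Q, u} ⊓ L = ⊥ := by
    apply le_bot_iff.mp
    calc Submodule.span ℂ {Q, u} ⊓ L ≤ V ⊓ L := inf_le_inf_right L hspanV
      _ = ⊥ := hVL
  have hfin2 : finrank ℂ (Submodule.span ℂ {Q, u} : Submodule ℂ (Fin (N+1) → ℂ)) = 2 := by
    have hr : Set.range ![Q, u] = {Q, u} := by
      ext x
      simp [Matrix.range_cons, Matrix.range_empty, or_comm]
    have h := finrank_span_eq_card hQu
    rw [hr] at h
    simpa using h
  have hWrank : finrank ℂ (Submodule.span ℂ {Q, u} ⊔ L : Submodule ℂ (Fin (N+1) → ℂ)) = N := by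
    have h := Submodule.finrank_sup_add_finrank_inf_eq (Submodule.span ℂ {Q, u}) L
    rw [hinf, hfin2, hL] at h
    simp only [finrank_bot] at h
    omega
  have hGne : LinearMap.ker G ≠ ⊤ := by
    obtain ⟨i, hi⟩ := hand1
    intro htop
    apply hi
    have hmem : (Pi.single i 1 : Fin (N+1) → ℂ) ∈ LinearMap.ker G := by
      rw [htop]; trivial
    have := LinearMap.mem_ker.mp hmem
    rw [hG] at this
    simpa [Pi.single_apply, Finset.sum_ite_eq', mul_ite] using this
  have hkerW : Submodule.span ℂ {Q, u} ⊔ L = LinearMap.ker G := by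
    apply Submodule.eq_of_le_of_finrank_le
    · intro w hw
      exact LinearMap.mem_ker.mpr (hvan w hw)
    · rw [hWrank]
      have hlt : finrank ℂ (LinearMap.ker G : Submodule ℂ (Fin (N+1) → ℂ))
          < finrank ℂ (Fin (N+1) → ℂ) :=
        Submodule.finrank_lt hGne
      rw [Module.finrank_pi] at hlt
      simpa using Nat.lt_succ_iff.mp (by simpa using hlt)
  have hand2 : ∀ w : Fin (N+1) → ℂ,
      (∑ i, MvPolynomial.eval P (pderiv i f) * w i = 0) ↔
        w ∈ Submodule.span ℂ {Q, u} ⊔ L := by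
    intro w
    rw [← hG, hkerW]
    exact ⟨fun h => LinearMap.mem_ker.mpr h, fun h => LinearMap.mem_ker.mp h⟩
  -- construct the linear form ℓ
  have hQW' : Q ∈ Submodule.span ℂ {Q} ⊔ L :=
    Submodule.mem_sup_left (Submodule.mem_span_singleton_self Q)
  have huW' : u ∉ Submodule.span ℂ {Q} ⊔ L := by
    intro hu
    obtain ⟨y, hy, z, hz, hyz⟩ := Submodule.mem_sup.mp hu
    obtain ⟨s, rfl⟩ := Submodule.mem_span_singleton.mp hy
    have hzeq : z = u - s • Q := by rw [← hyz]; abel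
    have hmem : u - s • Q ∈ V ⊓ L :=
      ⟨Submodule.sub_mem V huV (Submodule.smul_mem V s hQV), hzeq ▸ hz⟩
    rw [hVL, Submodule.mem_bot] at hmem
    have husQ : s • Q + (-1 : ℂ) • u = 0 := by
      rw [neg_one_smul]
      rw [sub_eq_zero] at hmem
      rw [← hmem]
      abel
    have := (LinearIndependent.pair_iff.mp hQu s (-1) husQ).2
    norm_num at this
  obtain ⟨ℓ, hℓu, hℓmap⟩ :=
    Submodule.exists_dual_map_eq_bot_of_notMem huW' inferInstance
  have hℓ0 : ∀ x ∈ Submodule.span ℂ {Q} ⊔ L, ℓ x = 0 := by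
    intro x hx
    have hmem : ℓ x ∈ (Submodule.span ℂ {Q} ⊔ L).map ℓ := Submodule.mem_map_of_mem hx
    rwa [hℓmap, Submodule.mem_bot] at hmem
  have hℓQ : ℓ Q = 0 := hℓ0 Q hQW'
  have hℓL : ∀ z ∈ L, ℓ z = 0 := fun z hz => hℓ0 z (Submodule.mem_sup_right hz)
  set b := ℓ u with hb
  have hbne : b ≠ 0 := hℓu
  have hWD : ∀ w ∈ Submodule.span ℂ {Q, u} ⊔ L,
      ∃ (s t : ℂ) (z : Fin (N+1) → ℂ), z ∈ L ∧ w = s • Q + t • u + z := by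
    intro w hw
    obtain ⟨y, hy, z, hz, rfl⟩ := Submodule.mem_sup.mp hw
    obtain ⟨s, t, rfl⟩ := Submodule.mem_span_pair.mp hy
    exact ⟨s, t, z, hz, rfl⟩
  have hℓval : ∀ s t : ℂ, ∀ z ∈ L, ℓ (s • Q + t • u + z) = t * b := by
    intro s t z hz
    rw [map_add, map_add, map_smul, map_smul, hℓQ, hℓL z hz, smul_eq_mul,
      smul_eq_mul]
    ring
  refine ⟨hPval, hand1, hand2, ℓ, c / b ^ d, div_ne_zero hc (pow_ne_zero _ hbne), ?_, ?_⟩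
  · apply le_antisymm
    · refine le_inf ?_ ?_
      · exact sup_le_sup_right (Submodule.span_mono (by simp)) L
      · intro x hx
        exact LinearMap.mem_ker.mpr (hℓ0 x hx)
    · rintro x ⟨hxW, hxk⟩
      obtain ⟨s, t, z, hz, rfl⟩ := hWD x hxW
      have hval := hℓval s t z hz
      rw [LinearMap.mem_ker.mp hxk] at hval
      have ht : t = 0 := by
        rcases mul_eq_zero.mp hval.symm with h | h
        · exact h
        · exact absurd h hbne
      rw [ht, zero_smul, add_zero]
      exact Submodule.mem_sup.mpr
        ⟨s • Q, Submodule.smul_mem _ s (Submodule.mem_span_singleton_self Q), z, hz, rfl⟩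
  · intro w hw
    obtain ⟨s, t, z, hz, rfl⟩ := hWD w hw
    rw [hℓval s t z hz]
    have h1 : s • Q + t • u + z = (s • Q + t • u) + (1:ℂ) • z := by rw [one_smul]
    rw [h1, hT _ z hz 1, hline s t, mul_pow]
    field_simp
end

section
/- Let Λ₁, ..., Λ_d be d distinct (N−2)-dimensional linear subspaces of ℙ^N all containing a common (N−3)-dimensional linear subspace L, and suppose X ⊂ ℙ^N is an irreducible hypersurface of degree d such that for each i there is a hyperplane Πᵢ with Πᵢ ∩ X = d·Λᵢ as divisors on Πᵢ. Then X is a cone with vertex L over a plane curve of degree d. -/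
open MvPolynomial Module

namespace Stmt19Aux

variable {n : ℕ}

/-- The degree-1 polynomial attached to a linear functional. -/
noncomputable def linPoly (ψ : (Fin n → ℂ) →ₗ[ℂ] ℂ) : MvPolynomial (Fin n) ℂ :=
  ∑ k, C (ψ (Pi.single k 1)) * X k

lemma eval_linPoly (ψ : (Fin n → ℂ) →ₗ[ℂ] ℂ) (y : Fin n → ℂ) :
    eval y (linPoly ψ) = ψ y := by
  have hy : y = ∑ k, y k • (Pi.single k (1:ℂ) : Fin n → ℂ) := by
    funext j
    simp [Finset.sum_apply, Pi.single_apply]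
  conv_rhs => rw [hy]
  rw [map_sum]
  simp [linPoly, mul_comm]

lemma linPoly_ne_zero {ψ : (Fin n → ℂ) →ₗ[ℂ] ℂ} (hψ : ψ ≠ 0) : linPoly ψ ≠ 0 := by
  intro h0
  refine hψ (LinearMap.ext fun y => ?_)
  rw [← eval_linPoly ψ y, h0, map_zero]
  rfl

lemma exists_eval_ne_zero {ι : Type*} (s : Finset ι) (ψ : ι → ((Fin n → ℂ) →ₗ[ℂ] ℂ))
    (hs : ∀ i ∈ s, ψ i ≠ 0) : ∃ y, ∀ i ∈ s, ψ i y ≠ 0 := by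
  have hP : (∏ i ∈ s, linPoly (ψ i)) ≠ 0 :=
    Finset.prod_ne_zero_iff.mpr fun i hi => linPoly_ne_zero (hs i hi)
  by_contra hcon
  push_neg at hcon
  apply hP
  apply MvPolynomial.funext (q := 0)
  intro x
  rw [map_zero, map_prod]
  obtain ⟨i, hi, hzero⟩ := hcon x
  exact Finset.prod_eq_zero hi (by rw [eval_linPoly]; exact hzero)

end Stmt19Aux

namespace Stmt19Aux

variable {n : ℕ}

/-- Restriction of a multivariate polynomial to the line `t ↦ x + t • y`. -/
noncomputable def lineP (h : MvPolynomial (Fin n) ℂ) (x y : Fin n → ℂ) : Polynomial ℂ :=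
  eval₂ Polynomial.C (fun k => Polynomial.C (x k) + Polynomial.X * Polynomial.C (y k)) h

lemma lineP_eval (h : MvPolynomial (Fin n) ℂ) (x y : Fin n → ℂ) (t : ℂ) :
    (lineP h x y).eval t = eval (x + t • y) h := by
  unfold lineP
  rw [show (Polynomial.eval t : Polynomial ℂ → ℂ) = (Polynomial.evalRingHom t : Polynomial ℂ →+* ℂ) from rfl]
  rw [MvPolynomial.eval₂_comp_left (Polynomial.evalRingHom t) Polynomial.C
    (fun k => Polynomial.C (x k) + Polynomial.X * Polynomial.C (y k)) h]
  have h1 : (Polynomial.evalRingHom t).comp Polynomial.C = RingHom.id ℂ := by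
    ext a; simp
  rw [h1]
  have h2 : ((Polynomial.evalRingHom t : Polynomial ℂ →+* ℂ) ∘
      fun k => Polynomial.C (x k) + Polynomial.X * Polynomial.C (y k)) = x + t • y := by
    funext k
    simp only [Function.comp_apply, Polynomial.coe_evalRingHom, Polynomial.eval_add,
      Polynomial.eval_C, Polynomial.eval_mul, Polynomial.eval_X, Pi.add_apply, Pi.smul_apply,
      smul_eq_mul]
  rw [h2]
  rw [MvPolynomial.eval₂_id]

lemma lineP_natDegree_le (h : MvPolynomial (Fin n) ℂ) (x y : Fin n → ℂ) :
    (lineP h x y).natDegree ≤ h.totalDegree := by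
  unfold lineP
  rw [MvPolynomial.eval₂_eq]
  apply Polynomial.natDegree_sum_le_of_forall_le
  intro m hm
  refine le_trans (Polynomial.natDegree_C_mul_le _ _) ?_
  refine le_trans (Polynomial.natDegree_prod_le _ _) ?_
  refine le_trans (Finset.sum_le_sum (fun k _ => ?_)) (MvPolynomial.le_totalDegree hm)
  refine le_trans (Polynomial.natDegree_pow_le) ?_
  have : (Polynomial.C (x k) + Polynomial.X * Polynomial.C (y k)).natDegree ≤ 1 := by
    refine le_trans (Polynomial.natDegree_add_le _ _) ?_
    simp only [Polynomial.natDegree_C]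
    refine max_le (by norm_num) ?_
    refine le_trans (Polynomial.natDegree_mul_le) ?_
    simp
  calc (m k) * _ ≤ m k * 1 := Nat.mul_le_mul_left _ this
    _ = m k := mul_one _

end Stmt19Aux

namespace Stmt19Aux

variable {n : ℕ}

lemma finsupp_eq_of_le_of_sum_le {μ m : Fin n →₀ ℕ} (h : μ ≤ m)
    (hs : (∑ k, m k) ≤ ∑ k, μ k) : μ = m := by
  have hle : ∀ k : Fin n, μ k ≤ m k := fun k => Finsupp.le_def.mp h k
  have hsum : (∑ k, μ k) = ∑ k, m k :=
    le_antisymm (Finset.sum_le_sum fun k _ => hle k) hs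
  ext k
  exact (Finset.sum_eq_sum_iff_of_le (fun k _ => hle k)).mp hsum k (Finset.mem_univ k)

/-- Coefficient control for powers of `X a + C c`. -/
lemma pow_linear_coeff (a : Fin n) (c : ℂ) (e : ℕ) :
    (∀ μ, coeff μ ((X a + C c) ^ e) ≠ 0 → μ ≤ Finsupp.single a e) ∧
      coeff (Finsupp.single a e) ((X a + C c) ^ e) = (1 : ℂ) := by
  classical
  induction e with
  | zero =>
    constructor
    · intro μ hμ
      rw [pow_zero, MvPolynomial.coeff_one] at hμ
      rcases eq_or_ne μ 0 with rfl | hne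
      · simp
      · rw [if_neg (fun h => hne h.symm)] at hμ
        exact absurd rfl hμ
    · simp
  | succ e ih =>
    have hexp : (X a + C c : MvPolynomial (Fin n) ℂ) ^ (e + 1)
        = (X a + C c) ^ e * X a + C c * (X a + C c) ^ e := by
      rw [pow_succ, mul_add, mul_comm ((X a + C c) ^ e) (C c)]
    constructor
    · intro μ hμ
      rw [hexp, MvPolynomial.coeff_add, MvPolynomial.coeff_mul_X' μ a,
        MvPolynomial.coeff_C_mul] at hμ
      have hs : Finsupp.single a e ≤ Finsupp.single a (e + 1) := by
        rw [Finsupp.le_def]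
        intro b
        rcases eq_or_ne b a with rfl | hb
        · simp
        · simp [Finsupp.single_apply_eq_zero.2 fun h => absurd h.symm hb]
      rcases ne_or_eq (c * coeff μ ((X a + C c) ^ e)) 0 with h2 | h2
      · have h2' : coeff μ ((X a + C c) ^ e) ≠ 0 := fun h0 => h2 (by rw [h0, mul_zero])
        exact le_trans (ih.1 μ h2') hs
      · rw [h2, add_zero] at hμ
        by_cases hmem : a ∈ μ.support
        · rw [if_pos hmem] at hμ
          have hle := ih.1 _ hμ
          rw [Finsupp.le_def] at hle ⊢
          intro b
          have h2 := hle b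
          have h3 : 1 ≤ μ a := by rw [Finsupp.mem_support_iff] at hmem; omega
          rcases eq_or_ne b a with rfl | hb
          · simp only [Finsupp.tsub_apply, Finsupp.single_eq_same] at h2 ⊢
            omega
          · simp only [Finsupp.tsub_apply,
              Finsupp.single_eq_of_ne' (Ne.symm hb)] at h2 ⊢
            omega
        · rw [if_neg hmem] at hμ
          exact absurd rfl hμ
    · rw [hexp, MvPolynomial.coeff_add, MvPolynomial.coeff_mul_X',
        MvPolynomial.coeff_C_mul]
      have hmem : a ∈ (Finsupp.single a (e + 1)).support := by
        rw [Finsupp.mem_support_iff, Finsupp.single_apply, if_pos rfl]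
        omega
      rw [if_pos hmem]
      have hsub : Finsupp.single a (e + 1) - Finsupp.single a 1 = Finsupp.single a e := by
        ext b
        rw [Finsupp.tsub_apply]
        rcases eq_or_ne b a with rfl | hb
        · simp
        · simp [Finsupp.single_apply_eq_zero.2 fun h => absurd h.symm hb]
      rw [hsub, ih.2]
      have hzero : coeff (Finsupp.single a (e + 1)) ((X a + C c) ^ e) = 0 := by
        by_contra h0
        have := ih.1 _ h0
        have h3 := Finsupp.le_def.mp this a
        simp only [Finsupp.single_eq_same] at h3
        omega
      rw [hzero, mul_zero, add_zero]

end Stmt19Aux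

namespace Stmt19Aux2
open Stmt19Aux

variable {n : ℕ}

lemma mul_coeff_step {P1 P2 : MvPolynomial (Fin n) ℂ} {m1 m2 : Fin n →₀ ℕ}
    (h1 : (∀ μ, coeff μ P1 ≠ 0 → μ ≤ m1) ∧ coeff m1 P1 = 1)
    (h2 : (∀ μ, coeff μ P2 ≠ 0 → μ ≤ m2) ∧ coeff m2 P2 = 1) :
    (∀ μ, coeff μ (P1 * P2) ≠ 0 → μ ≤ m1 + m2) ∧ coeff (m1 + m2) (P1 * P2) = 1 := by
  constructor
  · intro μ hμ
    rw [MvPolynomial.coeff_mul] at hμ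
    obtain ⟨x, hx, hxne⟩ := Finset.exists_ne_zero_of_sum_ne_zero hμ
    have hx1 : coeff x.1 P1 ≠ 0 := fun h => hxne (by rw [h, zero_mul])
    have hx2 : coeff x.2 P2 ≠ 0 := fun h => hxne (by rw [h, mul_zero])
    have hsum : x.1 + x.2 = μ := Finset.HasAntidiagonal.mem_antidiagonal.mp hx
    rw [← hsum]
    exact add_le_add (h1.1 _ hx1) (h2.1 _ hx2)
  · rw [MvPolynomial.coeff_mul]
    refine Eq.trans (Finset.sum_eq_single_of_mem (f := fun x => coeff x.1 P1 * coeff x.2 P2)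
      (m1, m2) (by simp) ?_) (by rw [h1.2, h2.2, one_mul])
    · rintro ⟨a, b⟩ hab hne
      by_contra hne0
      have ha : coeff a P1 ≠ 0 := fun h => hne0 (by show coeff a P1 * coeff b P2 = 0; rw [h, zero_mul])
      have hb : coeff b P2 ≠ 0 := fun h => hne0 (by show coeff a P1 * coeff b P2 = 0; rw [h, mul_zero])
      have ha1 := h1.1 _ ha
      have hb1 := h2.1 _ hb
      have hsum : a + b = m1 + m2 := Finset.HasAntidiagonal.mem_antidiagonal.mp hab
      apply hne
      have haeq : a = m1 := by
        ext k
        have l1 := Finsupp.le_def.mp ha1 k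
        have l2 := Finsupp.le_def.mp hb1 k
        have l3 : a k + b k = m1 k + m2 k := by
          rw [← Finsupp.add_apply, ← Finsupp.add_apply, hsum]
        omega
      have hbeq : b = m2 := by
        ext k
        have l1 := Finsupp.le_def.mp ha1 k
        have l2 := Finsupp.le_def.mp hb1 k
        have l3 : a k + b k = m1 k + m2 k := by
          rw [← Finsupp.add_apply, ← Finsupp.add_apply, hsum]
        omega
      rw [haeq, hbeq]

lemma prod_linear_coeff (w : Fin n → ℂ) (m : Fin n →₀ ℕ) :
    (∀ μ, coeff μ (m.prod fun k e => (X k + C (w k)) ^ e) ≠ 0 → μ ≤ m) ∧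
      coeff m (m.prod fun k e => (X k + C (w k)) ^ e) = (1 : ℂ) := by
  induction m using Finsupp.induction with
  | zero =>
    rw [Finsupp.prod_zero_index]
    constructor
    · intro μ hμ
      rcases eq_or_ne μ 0 with rfl | hne
      · exact le_refl _
      · rw [MvPolynomial.coeff_one, if_neg (fun h => hne h.symm)] at hμ
        exact absurd rfl hμ
    · simp
  | single_add a e m' ha' he ih =>
    have hsplit : ((Finsupp.single a e + m').prod fun k e => (X k + C (w k)) ^ e)
        = ((X a + C (w a)) ^ e) * (m'.prod fun k e => (X k + C (w k)) ^ e) := by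
      rw [Finsupp.prod_add_index' (fun k => pow_zero _) (fun k b1 b2 => pow_add _ b1 b2)]
      congr 1
      exact Finsupp.prod_single_index (pow_zero _)
    rw [hsplit]
    exact mul_coeff_step (pow_linear_coeff a (w a) e) ih

end Stmt19Aux2

namespace Stmt19Aux3
open Stmt19Aux Stmt19Aux2

variable {n : ℕ}

lemma degree_support_eq {f : MvPolynomial (Fin n) ℂ} {d : ℕ} (hf : f.IsHomogeneous d)
    {m : Fin n →₀ ℕ} (hm : m ∈ f.support) : (∑ k, m k) = d := by
  have h1 := hf (MvPolynomial.mem_support_iff.mp hm)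
  rw [← h1, Finsupp.weight_apply, Finsupp.sum_fintype]
  · simp
  · intro k; simp

lemma coeff_shift_eq {f : MvPolynomial (Fin n) ℂ} {d : ℕ} (hf : f.IsHomogeneous d)
    (w : Fin n → ℂ) {μ : Fin n →₀ ℕ} (hμ : d ≤ ∑ k, μ k) :
    coeff μ (aeval (fun k => X k + C (w k)) f) = coeff μ f := by
  conv_lhs => rw [f.as_sum, map_sum]
  have hterm : ∀ m : Fin n →₀ ℕ,
      (aeval (fun k => X k + C (w k)) (monomial m (coeff m f)) : MvPolynomial (Fin n) ℂ)
      = C (coeff m f) * m.prod fun k e => (X k + C (w k)) ^ e := by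
    intro m
    rw [aeval_monomial]
    rfl
  rw [Finset.sum_congr rfl fun m _ => hterm m, MvPolynomial.coeff_sum]
  have hmain : ∀ m ∈ f.support, m ≠ μ →
      coeff μ (C (coeff m f) * m.prod fun k e => (X k + C (w k)) ^ e) = 0 := by
    intro m hm hne
    rw [MvPolynomial.coeff_C_mul]
    rcases eq_or_ne (coeff μ (m.prod fun k e => (X k + C (w k)) ^ e)) 0 with h0 | h0
    · rw [h0, mul_zero]
    · exfalso
      apply hne
      have hle := (prod_linear_coeff w m).1 μ h0
      exact (finsupp_eq_of_le_of_sum_le hle (by rw [degree_support_eq hf hm]; exact hμ)).symm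
  by_cases hmem : μ ∈ f.support
  · rw [Finset.sum_eq_single_of_mem μ hmem hmain, MvPolynomial.coeff_C_mul,
      (prod_linear_coeff w μ).2, mul_one]
  · rw [Finset.sum_eq_zero, (MvPolynomial.notMem_support_iff.mp hmem)]
    intro m hm
    exact hmain m hm (fun h => hmem (h ▸ hm))

lemma totalDegree_shift_sub_le {f : MvPolynomial (Fin n) ℂ} {d : ℕ} (hf : f.IsHomogeneous d)
    (w : Fin n → ℂ) :
    ((aeval (fun k => X k + C (w k)) f : MvPolynomial (Fin n) ℂ) - f).totalDegree ≤ d - 1 := by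
  rw [MvPolynomial.totalDegree]
  apply Finset.sup_le
  intro μ hμ
  have hco := MvPolynomial.mem_support_iff.mp hμ
  have hsum : μ.sum (fun _ e => e) = ∑ k, μ k := Finsupp.sum_fintype _ _ fun _ => rfl
  by_contra hgt
  push_neg at hgt
  apply hco
  have hd : d ≤ ∑ k, μ k := by omega
  rw [MvPolynomial.coeff_sub, coeff_shift_eq hf w hd, sub_self]

lemma eval_shift (f : MvPolynomial (Fin n) ℂ) (w x : Fin n → ℂ) :
    eval x (aeval (fun k => X k + C (w k)) f : MvPolynomial (Fin n) ℂ) = eval (x + w) f := by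
  rw [aeval_def, MvPolynomial.algebraMap_eq]
  refine Eq.trans (MvPolynomial.eval₂_comp_left (eval x) C (fun k => X k + C (w k)) f) ?_
  have h1 : (eval x).comp (C : ℂ →+* MvPolynomial (Fin n) ℂ) = RingHom.id ℂ := by
    ext a; simp
  have h2 : ((eval x : MvPolynomial (Fin n) ℂ →+* ℂ) ∘ fun k => X k + C (w k)) = x + w := by
    funext k; simp
  rw [h1, h2, MvPolynomial.eval₂_id]

lemma eval_smul_homog {f : MvPolynomial (Fin n) ℂ} {d : ℕ} (hf : f.IsHomogeneous d)
    (s : ℂ) (v : Fin n → ℂ) : eval (s • v) f = s ^ d * eval v f := by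
  conv_lhs => rw [f.as_sum]
  conv_rhs => rw [f.as_sum]
  rw [map_sum, map_sum, Finset.mul_sum]
  apply Finset.sum_congr rfl
  intro m hm
  rw [MvPolynomial.eval_monomial, MvPolynomial.eval_monomial]
  have hprod : (m.prod fun k e => ((s • v) k) ^ e) = s ^ d * m.prod fun k e => (v k) ^ e := by
    rw [Finsupp.prod_fintype _ _ fun k => pow_zero _, Finsupp.prod_fintype _ _ fun k => pow_zero _]
    have hpt : ∀ k, ((s • v) k) ^ (m k) = s ^ (m k) * (v k) ^ (m k) := by
      intro k; rw [Pi.smul_apply, smul_eq_mul, mul_pow]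
    rw [Finset.prod_congr rfl fun k _ => hpt k, Finset.prod_mul_distrib,
      Finset.prod_pow_eq_pow_sum, degree_support_eq hf hm]
  rw [hprod]
  ring

end Stmt19Aux3

/-- Let `Λ₁, …, Λ_d` be `d` distinct `(N-2)`-dimensional linear subspaces of `ℙ^N` containing
a common `(N-3)`-dimensional linear subspace `L`, and let `X ⊂ ℙ^N` be an irreducible
hypersurface of degree `d` such that for each `i` some hyperplane `Πᵢ` satisfies
`Πᵢ ∩ X = d·Λᵢ` as divisors.  Then `X` is a cone with vertex `L` (over a plane curve of
degree `d`): for every `P ∈ L` and every `Q ∈ X`, the line `⟨P,Q⟩` lies in `X`. -/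
theorem stmt_19 (N d : ℕ) (hN : 3 ≤ N) (hd : 3 ≤ d)
    (f : MvPolynomial (Fin (N + 1)) ℂ) (hf : f.IsHomogeneous d) (hirr : Irreducible f)
    (L : Submodule ℂ (Fin (N + 1) → ℂ)) (hL : finrank ℂ L = N - 2)
    (Λ : Fin d → Submodule ℂ (Fin (N + 1) → ℂ)) (hΛinj : Function.Injective Λ)
    (hΛrk : ∀ i, finrank ℂ (Λ i) = N - 1) (hLΛ : ∀ i, L ≤ Λ i)
    (Pl : Fin d → Submodule ℂ (Fin (N + 1) → ℂ))
    (hPlrk : ∀ i, finrank ℂ (Pl i) = N) (hΛPl : ∀ i, Λ i ≤ Pl i)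
    (hdiv : ∀ i, DivisorCond N d f (Λ i) (Pl i)) :
    ∀ v : Fin (N + 1) → ℂ, eval v f = 0 →
      ∀ w ∈ L, ∀ s t : ℂ, eval (s • v + t • w) f = 0 := by
  classical
  choose ℓ c hc hΛeq hev using hdiv
  have hambient : finrank ℂ (Fin (N + 1) → ℂ) = N + 1 := by
    simp [Module.finrank_pi]
  have hd0 : d ≠ 0 := by omega
  -- distinctness of the hyperplanes
  have hPlne : ∀ i j : Fin d, i ≠ j → Pl i ≠ Pl j := by
    intro i j hij hEq
    apply hij
    apply hΛinj
    ext z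
    rw [hΛeq i, hΛeq j, Submodule.mem_inf, Submodule.mem_inf, hEq]
    have key2 : ∀ z', z' ∈ Pl j → (ℓ i z' = 0 ↔ ℓ j z' = 0) := by
      intro z' hzj
      have hzi : z' ∈ Pl i := hEq ▸ hzj
      have e1 := hev i z' hzi
      have e2 := hev j z' hzj
      constructor
      · intro h0
        have hz : c j * ℓ j z' ^ d = 0 := by rw [← e2, e1, h0, zero_pow hd0, mul_zero]
        rcases mul_eq_zero.mp hz with h | h
        · exact absurd h (hc j)
        · exact (pow_eq_zero_iff hd0).mp h
      · intro h0
        have hz : c i * ℓ i z' ^ d = 0 := by rw [← e1, e2, h0, zero_pow hd0, mul_zero]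
        rcases mul_eq_zero.mp hz with h | h
        · exact absurd h (hc i)
        · exact (pow_eq_zero_iff hd0).mp h
    constructor
    · rintro ⟨hz, hz2⟩
      exact ⟨hz, LinearMap.mem_ker.mpr ((key2 z hz).mp (LinearMap.mem_ker.mp hz2))⟩
    · rintro ⟨hz, hz2⟩
      exact ⟨hz, LinearMap.mem_ker.mpr ((key2 z hz).mpr (LinearMap.mem_ker.mp hz2))⟩
  -- the hyperplanes are proper
  have hPltop : ∀ i, Pl i ≠ ⊤ := by
    intro i h
    have hh := hPlrk i
    rw [h, finrank_top, hambient] at hh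
    omega
  -- functionals cutting out the hyperplanes
  have hφ : ∀ i : Fin d, ∃ φ : (Fin (N + 1) → ℂ) →ₗ[ℂ] ℂ, LinearMap.ker φ = Pl i := by
    intro i
    obtain ⟨x₀, -, hx₀⟩ := SetLike.exists_of_lt (show Pl i < ⊤ from lt_top_iff_ne_top.mpr (hPltop i))
    obtain ⟨φ, hφx, hφmap⟩ := Submodule.exists_dual_map_eq_bot_of_notMem hx₀ inferInstance
    have hle : Pl i ≤ LinearMap.ker φ := by
      intro z hz
      rw [LinearMap.mem_ker]
      have hmem : φ z ∈ (Pl i).map φ := ⟨z, hz, rfl⟩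
      rw [hφmap] at hmem
      exact hmem
    have hkerne : LinearMap.ker φ ≠ ⊤ := by
      intro h0
      exact hφx (LinearMap.mem_ker.mp (h0 ▸ Submodule.mem_top))
    have hkerrank : finrank ℂ (LinearMap.ker φ) ≤ N := by
      by_contra hgt
      push_neg at hgt
      have hle2 := Submodule.finrank_le (LinearMap.ker φ)
      rw [hambient] at hle2
      exact hkerne (Submodule.eq_top_of_finrank_eq (by omega))
    exact ⟨φ, (Submodule.eq_of_le_of_finrank_le hle (by rw [hPlrk i]; exact hkerrank)).symm⟩
  choose φ hφker using hφ
  have hφ0 : ∀ i, φ i ≠ 0 := by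
    intro i h0
    apply hPltop i
    rw [← hφker i, h0, LinearMap.ker_zero]
  -- key: f is invariant under translation by elements of L
  have key : ∀ w ∈ L, ∀ x, eval (x + w) f = eval x f := by
    intro w hw
    have hwPl : ∀ i, w ∈ Pl i := fun i => hΛPl i (hLΛ i hw)
    have hwℓ : ∀ i, ℓ i w = 0 := by
      intro i
      have hwΛ : w ∈ Λ i := hLΛ i hw
      rw [hΛeq i, Submodule.mem_inf] at hwΛ
      exact LinearMap.mem_ker.mp hwΛ.2
    set g : MvPolynomial (Fin (N + 1)) ℂ := aeval (fun k => X k + C (w k)) f with hg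
    have hvanish : ∀ (i : Fin d) (x : Fin (N + 1) → ℂ), x ∈ Pl i → eval x (g - f) = 0 := by
      intro i x hx
      rw [map_sub, hg, Stmt19Aux3.eval_shift]
      have hxw : x + w ∈ Pl i := (Pl i).add_mem hx (hwPl i)
      rw [hev i _ hxw, hev i _ hx, map_add, hwℓ i, add_zero, sub_self]
    have hdeg : (g - f).totalDegree ≤ d - 1 := Stmt19Aux3.totalDegree_shift_sub_le hf w
    have hzero : g - f = 0 := by
      apply MvPolynomial.funext
      intro x
      rw [map_zero]
      by_cases hx : ∃ i, x ∈ Pl i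
      · obtain ⟨i, hi⟩ := hx
        exact hvanish i x hi
      · push_neg at hx
        have hφx : ∀ i, φ i x ≠ 0 := by
          intro i h0
          exact hx i (by rw [← hφker i]; exact LinearMap.mem_ker.mpr h0)
        set ψ : Fin d × Fin d → ((Fin (N + 1) → ℂ) →ₗ[ℂ] ℂ) :=
          fun p => (φ p.1 x) • φ p.2 - (φ p.2 x) • φ p.1 with hψ
        have hsnz : ∀ i j : Fin d, i ≠ j → ψ (i, j) ≠ 0 := by
          intro i j hij h0
          apply hPlne i j hij
          rw [← hφker i, ← hφker j]
          have hrel : ∀ z, (φ i x) * φ j z = (φ j x) * φ i z := by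
            intro z
            have hz := LinearMap.congr_fun h0 z
            simp only [hψ, LinearMap.sub_apply, LinearMap.smul_apply, smul_eq_mul,
              LinearMap.zero_apply, sub_eq_zero] at hz
            exact hz
          ext z
          rw [LinearMap.mem_ker, LinearMap.mem_ker]
          constructor
          · intro hz
            have h1 := hrel z
            rw [hz, mul_zero] at h1
            rcases mul_eq_zero.mp h1 with h | h
            · exact absurd h (hφx i)
            · exact h
          · intro hz
            have h1 := hrel z
            rw [hz, mul_zero] at h1
            rcases mul_eq_zero.mp h1.symm with h | h
            · exact absurd h (hφx j)
            · exact h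
        set Ψ : Fin d × Fin d → ((Fin (N + 1) → ℂ) →ₗ[ℂ] ℂ) :=
          fun p => if p.1 = p.2 then φ p.1 else ψ p with hΨ
        obtain ⟨y, hy⟩ := Stmt19Aux.exists_eval_ne_zero Finset.univ Ψ (by
          rintro ⟨i, j⟩ -
          by_cases hij : i = j
          · rw [hΨ]; simp only [if_pos hij]; exact hφ0 i
          · rw [hΨ]; simp only [if_neg hij]; exact hsnz i j hij)
        have hφy : ∀ i, φ i y ≠ 0 := by
          intro i
          have hh := hy (i, i) (Finset.mem_univ _)
          rw [hΨ] at hh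
          simpa using hh
        have hψy : ∀ i j, i ≠ j → ψ (i, j) y ≠ 0 := by
          intro i j hij
          have hh := hy (i, j) (Finset.mem_univ _)
          rw [hΨ] at hh
          simpa [if_neg hij] using hh
        set t : Fin d → ℂ := fun i => -(φ i x) / (φ i y) with ht
        have hmem : ∀ i, x + (t i) • y ∈ Pl i := by
          intro i
          have hti : t i = -((φ i) x) / ((φ i) y) := rfl
          rw [← hφker i, LinearMap.mem_ker, map_add, map_smul, smul_eq_mul, hti,
            div_mul_cancel₀ _ (hφy i)]
          ring
        have htinj : Function.Injective t := by
          intro i j hij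
          by_contra hne
          apply hψy i j hne
          have hq : -(φ i x) / (φ i y) = -(φ j x) / (φ j y) := hij
          rw [div_eq_div_iff (hφy i) (hφy j)] at hq
          rw [hψ]
          simp only [LinearMap.sub_apply, LinearMap.smul_apply, smul_eq_mul]
          linear_combination -hq
        have hQ : Stmt19Aux.lineP (g - f) x y = 0 := by
          apply Polynomial.eq_zero_of_natDegree_lt_card_of_eval_eq_zero _ htinj
          · intro i
            rw [Stmt19Aux.lineP_eval]
            exact hvanish i _ (hmem i)
          · rw [Fintype.card_fin]
            calc (Stmt19Aux.lineP (g - f) x y).natDegree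
                ≤ (g - f).totalDegree := Stmt19Aux.lineP_natDegree_le _ _ _
              _ ≤ d - 1 := hdeg
              _ < d := by omega
        have hQ0 := Stmt19Aux.lineP_eval (g - f) x y 0
        rw [hQ] at hQ0
        simpa using hQ0.symm
    intro x
    have hfin := congrArg (eval x) hzero
    rw [map_sub, map_zero, sub_eq_zero, hg, Stmt19Aux3.eval_shift] at hfin
    exact hfin
  intro v hv w hw s t
  rw [key (t • w) (L.smul_mem t hw) (s • v), Stmt19Aux3.eval_smul_homog hf, hv, mul_zero]
end
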